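/- arXiv:2208.00552 — 10 statements merged into one kernel-verified Lean document; each statement's English description precedes it below -/
import Mathlib

section
/- Under the setup of the previous statement (exogenous controls Cov(W₁, W₂) = 0, Var(W₂) = 1, positive definiteness), let π₂ = Cov(W₂, X) (the W₂-coefficient in the projection of X on (W₁, W₂), which coincides with the simple projection coefficient under exogeneity), let X^{⊥W₁} = X − π₁'W₁, and let B = β_med − β_long. Then π₂ · γ₂ = B · Var(X^{⊥W₁}). -/
open scoped RealInnerProductSpace
open Matrix

/-- Gram (covariance) matrix of a finite family of demeaned square-integrable
random variables, modeled as vectors in a real inner product space where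
`⟪A, B⟫` is `Cov(A, B)`. -/
noncomputable def gram {V : Type*} [NormedAddCommGroup V] [InnerProductSpace ℝ V]
    {ι : Type*} [Fintype ι] (f : ι → V) : Matrix ι ι ℝ :=
  Matrix.of fun i j => ⟪f i, f j⟫

/-- `π₁ = Var(W₁)⁻¹ Cov(W₁, X)`: coefficient vector of the linear projection of
`X` on `W₁`. -/
noncomputable def pi1 {V : Type*} [NormedAddCommGroup V] [InnerProductSpace ℝ V]
    {d : ℕ} (W₁ : Fin d → V) (X : V) : Fin d → ℝ :=
  (gram W₁)⁻¹.mulVec fun i => ⟪W₁ i, X⟫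

/-- `X^{⊥W₁} = X − π₁'W₁`. -/
noncomputable def perpW1 {V : Type*} [NormedAddCommGroup V] [InnerProductSpace ℝ V]
    {d : ℕ} (W₁ : Fin d → V) (X : V) : V :=
  X - ∑ i, pi1 W₁ X i • W₁ i

lemma gram_sub_posDef {V : Type*} [NormedAddCommGroup V] [InnerProductSpace ℝ V] {d : ℕ}
    (X W₂ : V) (W₁ : Fin d → V)
    (hpd : (gram (Sum.elim (fun _ : Unit => X) (Sum.elim W₁ fun _ : Unit => W₂))).PosDef) :
    (gram W₁).PosDef := by
  rw [Matrix.posDef_iff_dotProduct_mulVec]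
  constructor
  · ext i j
    simp [_root_.gram, Matrix.IsHermitian, real_inner_comm]
  · intro v hv
    set w : Unit ⊕ (Fin d ⊕ Unit) → ℝ := Sum.elim 0 (Sum.elim v 0) with hw
    have hwne : w ≠ 0 := by
      obtain ⟨i, hi⟩ := Function.ne_iff.mp hv
      exact Function.ne_iff.mpr ⟨Sum.inr (Sum.inl i), by simpa [hw] using hi⟩
    have := hpd.dotProduct_mulVec_pos hwne
    have hquad : dotProduct (star w)
        ((gram (Sum.elim (fun _ : Unit => X) (Sum.elim W₁ fun _ : Unit => W₂))) *ᵥ w)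
        = dotProduct (star v) ((gram W₁) *ᵥ v) := by
      simp [_root_.gram, Matrix.mulVec, dotProduct, hw, Fintype.sum_sum_type]
    rw [hquad] at this
    exact this

lemma inner_W1_perpW1 {V : Type*} [NormedAddCommGroup V] [InnerProductSpace ℝ V] {d : ℕ}
    (X : V) (W₁ : Fin d → V) (hpd : (gram W₁).PosDef) (i : Fin d) :
    ⟪W₁ i, perpW1 W₁ X⟫ = 0 := by
  have hd : IsUnit (gram W₁).det := hpd.det_pos.ne'.isUnit
  have hmv : gram W₁ *ᵥ pi1 W₁ X = fun i => ⟪W₁ i, X⟫ := by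
    rw [pi1, Matrix.mulVec_mulVec, Matrix.mul_nonsing_inv _ hd, Matrix.one_mulVec]
  have := congrFun hmv i
  simp only [Matrix.mulVec, dotProduct, _root_.gram, Matrix.of_apply] at this
  rw [perpW1, inner_sub_right, inner_sum]
  simp only [real_inner_smul_right]
  rw [← this]
  ring_nf
  rw [Finset.sum_congr rfl fun j _ => mul_comm (pi1 W₁ X j) ⟪W₁ i, W₁ j⟫]
  ring

/-- `π₂ · γ₂ = B · Var(X^{⊥W₁})` where `π₂ = Cov(W₂, X)` and
`B = β_med − β_long`, under exogenous controls. -/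
theorem pi2_mul_gamma2_eq_bias_mul_varPerp
    {V : Type*} [NormedAddCommGroup V] [InnerProductSpace ℝ V] {d : ℕ}
    (Y X W₂ : V) (W₁ : Fin d → V)
    (hpdXW : (gram (Sum.elim (fun _ : Unit => X) (Sum.elim W₁ fun _ : Unit => W₂))).PosDef)
    (hpdYX : (gram (Sum.elim (fun _ : Unit => Y) (Sum.elim (fun _ : Unit => X) W₁))).PosDef)
    (hexog : ∀ i, ⟪W₁ i, W₂⟫ = 0)
    (hnorm : ⟪W₂, W₂⟫ = 1)
    (βlong βmed γ₂ : ℝ) (γ₁ γmed : Fin d → ℝ) (U Vres : V)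
    (hlong : Y = βlong • X + (∑ i, γ₁ i • W₁ i) + γ₂ • W₂ + U)
    (hUX : ⟪U, X⟫ = 0) (hUW1 : ∀ i, ⟪U, W₁ i⟫ = 0) (hUW2 : ⟪U, W₂⟫ = 0)
    (hmed : Y = βmed • X + (∑ i, γmed i • W₁ i) + Vres)
    (hVX : ⟪Vres, X⟫ = 0) (hVW1 : ∀ i, ⟪Vres, W₁ i⟫ = 0) :
    ⟪W₂, X⟫ * γ₂ = (βmed - βlong) * ⟪perpW1 W₁ X, perpW1 W₁ X⟫ := by
  have hpd1 : (gram W₁).PosDef := gram_sub_posDef X W₂ W₁ hpdXW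
  set P := perpW1 W₁ X with hP
  have horth : ∀ i, ⟪W₁ i, P⟫ = 0 := inner_W1_perpW1 X W₁ hpd1
  have hsumP : ∀ c : Fin d → ℝ, ⟪∑ i, c i • W₁ i, P⟫ = 0 := by
    intro c
    rw [sum_inner]
    simp [real_inner_smul_left, horth]
  have hXP : ⟪X, P⟫ = ⟪P, P⟫ := by
    have : ⟪P, P⟫ = ⟪X, P⟫ - ⟪∑ i, pi1 W₁ X i • W₁ i, P⟫ := by
      rw [hP, perpW1, inner_sub_left]
    rw [this, hsumP, sub_zero]
  have hW2P : ⟪W₂, P⟫ = ⟪W₂, X⟫ := by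
    rw [hP, perpW1, inner_sub_right, inner_sum]
    simp only [real_inner_smul_right]
    rw [Finset.sum_eq_zero fun j _ => by rw [real_inner_comm, hexog, mul_zero], sub_zero]
  have hUP : ⟪U, P⟫ = 0 := by
    rw [hP, perpW1, inner_sub_right, inner_sum]
    simp [real_inner_smul_right, hUX, hUW1]
  have hVP : ⟪Vres, P⟫ = 0 := by
    rw [hP, perpW1, inner_sub_right, inner_sum]
    simp [real_inner_smul_right, hVX, hVW1]
  have heq : ⟪βlong • X + (∑ i, γ₁ i • W₁ i) + γ₂ • W₂ + U, P⟫
      = ⟪βmed • X + (∑ i, γmed i • W₁ i) + Vres, P⟫ := by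
    rw [← hlong, ← hmed]
  simp only [inner_add_left, real_inner_smul_left] at heq
  rw [hsumP, hsumP, hUP, hVP, hXP, hW2P] at heq
  nlinarith [heq]
end

section
/- In the setting of the previous statement, define R²_short = Var(β_short X)/Var(Y) and R²_med = Var(β_med X + γ_med'W₁)/Var(Y), with Var(Y) > 0. Then (R²_med − R²_short)·Var(Y) = Var(γ_med'W₁) − Var(X)·(β_short − β_med)². -/
open scoped RealInnerProductSpace

/-- `(R²_med − R²_short)·Var(Y) = Var(γ_med'W₁) − Var(X)·(β_short − β_med)²`,
where `R²_short = Var(β_short X)/Var(Y)` and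
`R²_med = Var(β_med X + γ_med'W₁)/Var(Y)`. -/
theorem r2_med_sub_r2_short
    {V : Type*} [NormedAddCommGroup V] [InnerProductSpace ℝ V] {d : ℕ}
    (Y X : V) (W₁ : Fin d → V)
    (hpdXW : (gram (Sum.elim (fun _ : Unit => X) W₁)).PosDef)
    (hvarX : 0 < ⟪X, X⟫) (hvarY : 0 < ⟪Y, Y⟫)
    (βmed : ℝ) (γmed : Fin d → ℝ) (Vres : V)
    (hmed : Y = βmed • X + (∑ i, γmed i • W₁ i) + Vres)
    (hVX : ⟪Vres, X⟫ = 0) (hVW1 : ∀ i, ⟪Vres, W₁ i⟫ = 0) :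
    (⟪βmed • X + ∑ i, γmed i • W₁ i, βmed • X + ∑ i, γmed i • W₁ i⟫ / ⟪Y, Y⟫
        - ⟪(⟪Y, X⟫ / ⟪X, X⟫) • X, (⟪Y, X⟫ / ⟪X, X⟫) • X⟫ / ⟪Y, Y⟫) * ⟪Y, Y⟫
      = ⟪∑ i, γmed i • W₁ i, ∑ i, γmed i • W₁ i⟫
        - ⟪X, X⟫ * (⟪Y, X⟫ / ⟪X, X⟫ - βmed) ^ 2 := by

  set W : V := ∑ i, γmed i • W₁ i with hW
  have hYX : ⟪Y, X⟫ = βmed * ⟪X, X⟫ + ⟪X, W⟫ := by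
    rw [hmed]
    rw [inner_add_left, inner_add_left, real_inner_smul_left, hVX,
      real_inner_comm W X]
    ring
  have hPP : ⟪βmed • X + W, βmed • X + W⟫
      = βmed * βmed * ⟪X, X⟫ + 2 * βmed * ⟪X, W⟫ + ⟪W, W⟫ := by
    simp only [inner_add_left, inner_add_right, real_inner_smul_left,
      real_inner_smul_right, real_inner_comm W X]
    ring
  rw [hPP, real_inner_smul_left, real_inner_smul_right, hYX]
  field_simp
  ring
end

section
/- Let (Y, X, W₁, W₂) satisfy: Var(Y, X, W₁, W₂) finite, Var(X, W₁, W₂) and Var(Y, X, W₁) positive definite, Cov(W₁, W₂) = 0, Var(W₂) = 1, γ₁ ≠ 0 and γ₂ ≠ 0 (coefficients on W₁ and W₂ in the long projection of Y on (X, W₁, W₂)), and suppose δ ∈ ℝ satisfies δ·Cov(X, γ₁'W₁)/Var(γ₁'W₁) = Cov(X, γ₂W₂)/Var(γ₂W₂). Let B = β_med − β_long, R²_long = Var(fitted long)/Var(Y), R²_med = Var(fitted medium)/Var(Y). Then (R²_long − R²_med)·Var(Y)·δ·Cov(X, γ₁'W₁) = B·Var(X^{⊥W₁})·( Var(γ₁'W₁)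 − B·δ·Cov(X, γ₁'W₁) ). -/
open scoped RealInnerProductSpace

open Matrix

section Aux
variable {V : Type*} [NormedAddCommGroup V] [InnerProductSpace ℝ V]
    {ι : Type*} [Fintype ι]

lemma sum_smul_inner (f : ι → V) (a : ι → ℝ) (z : V) :
    ⟪∑ i, a i • f i, z⟫ = ∑ i, a i * ⟪f i, z⟫ := by
  rw [sum_inner]; simp [real_inner_smul_left]

lemma inner_sum_smul (z : V) (f : ι → V) (a : ι → ℝ) :
    ⟪z, ∑ i, a i • f i⟫ = ∑ i, a i * ⟪z, f i⟫ := by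
  rw [inner_sum]; simp [real_inner_smul_right]

lemma quad_gram (f : ι → V) (x y : ι → ℝ) :
    x ⬝ᵥ (gram f).mulVec y = ⟪∑ i, x i • f i, ∑ j, y j • f j⟫ := by
  simp only [dotProduct, Matrix.mulVec, _root_.gram, Matrix.of_apply,
    sum_smul_inner, inner_sum_smul, Finset.mul_sum]
  rw [Finset.sum_comm]
  refine Finset.sum_congr rfl fun i _ => Finset.sum_congr rfl fun j _ => ?_
  rw [real_inner_comm]
  ring

lemma gram_isSymm (f : ι → V) : (gram f).IsHermitian := by
  ext i j
  simpa [_root_.gram] using real_inner_comm (f i) (f j)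

lemma gram_posdef_of_sub {d : ℕ} {X W₂ : V} {W₁ : Fin d → V}
    (hpd : (gram (Sum.elim (fun _ : Unit => X) (Sum.elim W₁ fun _ : Unit => W₂))).PosDef) :
    (gram W₁).PosDef := by
  refine Matrix.PosDef.of_dotProduct_mulVec_pos (gram_isSymm _) fun x hx => ?_
  set x' : Unit ⊕ (Fin d ⊕ Unit) → ℝ := Sum.elim 0 (Sum.elim x 0) with hx'def
  have hx' : x' ≠ 0 := by
    intro h
    apply hx
    funext i
    have := congrFun h (Sum.inr (Sum.inl i))
    simpa [hx'def] using this
  have h := hpd.dotProduct_mulVec_pos hx'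
  rw [star_trivial] at h
  have key : x' ⬝ᵥ (gram (Sum.elim (fun _ : Unit => X) (Sum.elim W₁ fun _ : Unit => W₂))).mulVec x'
      = x ⬝ᵥ (gram W₁).mulVec x := by
    rw [quad_gram, quad_gram]
    congr 1 <;>
    · rw [Fintype.sum_sum_type, Fintype.sum_sum_type]
      simp [hx'def]
  rw [key] at h
  rw [star_trivial]
  exact h

lemma inner_perp {d : ℕ} (W₁ : Fin d → V) (X z : V) :
    ⟪z, perpW1 W₁ X⟫ = ⟪z, X⟫ - ∑ j, pi1 W₁ X j * ⟪z, W₁ j⟫ := by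
  rw [perpW1, inner_sub_right, inner_sum_smul]

lemma perp_inner_W1 {d : ℕ} {W₁ : Fin d → V} {X : V}
    (hpd : (gram W₁).PosDef) (i : Fin d) :
    ⟪perpW1 W₁ X, W₁ i⟫ = 0 := by
  have hdet : IsUnit (gram W₁).det := by
    have := hpd.det_pos
    exact isUnit_iff_ne_zero.mpr this.ne'
  have hmv : (gram W₁).mulVec (pi1 W₁ X) = fun i => ⟪W₁ i, X⟫ := by
    rw [pi1, Matrix.mulVec_mulVec, Matrix.mul_nonsing_inv _ hdet, Matrix.one_mulVec]
  have h2 : ∑ j, pi1 W₁ X j * ⟪W₁ j, W₁ i⟫ = ⟪W₁ i, X⟫ := by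
    have hh := congrFun hmv i
    simp only [Matrix.mulVec, dotProduct, _root_.gram, Matrix.of_apply] at hh
    rw [← hh]
    refine Finset.sum_congr rfl fun j _ => ?_
    rw [real_inner_comm (W₁ j) (W₁ i)]
    ring
  rw [perpW1, inner_sub_left, sum_smul_inner, h2, real_inner_comm, sub_self]

end Aux

/-- Oster's third equation:
`(R²_long − R²_med)·Var(Y)·δ·Cov(X, γ₁'W₁)
   = B·Var(X^{⊥W₁})·(Var(γ₁'W₁) − B·δ·Cov(X, γ₁'W₁))`
with `B = β_med − β_long`, under exogenous controls, normalization
`Var(W₂) = 1`, nonzero long coefficients, and the proportional-selection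
definition of `δ`. -/
theorem oster_third_equation
    {V : Type*} [NormedAddCommGroup V] [InnerProductSpace ℝ V] {d : ℕ}
    (Y X W₂ : V) (W₁ : Fin d → V)
    (hpdXW : (gram (Sum.elim (fun _ : Unit => X) (Sum.elim W₁ fun _ : Unit => W₂))).PosDef)
    (hpdYX : (gram (Sum.elim (fun _ : Unit => Y) (Sum.elim (fun _ : Unit => X) W₁))).PosDef)
    (hexog : ∀ i, ⟪W₁ i, W₂⟫ = 0)
    (hnorm : ⟪W₂, W₂⟫ = 1)
    (βlong βmed γ₂ δ : ℝ) (γ₁ γmed : Fin d → ℝ) (U Vres : V)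
    (hγ₁ : γ₁ ≠ 0) (hγ₂ : γ₂ ≠ 0)
    (hlong : Y = βlong • X + (∑ i, γ₁ i • W₁ i) + γ₂ • W₂ + U)
    (hUX : ⟪U, X⟫ = 0) (hUW1 : ∀ i, ⟪U, W₁ i⟫ = 0) (hUW2 : ⟪U, W₂⟫ = 0)
    (hmed : Y = βmed • X + (∑ i, γmed i • W₁ i) + Vres)
    (hVX : ⟪Vres, X⟫ = 0) (hVW1 : ∀ i, ⟪Vres, W₁ i⟫ = 0)
    (hδ : δ * (⟪X, ∑ i, γ₁ i • W₁ i⟫ / ⟪∑ i, γ₁ i • W₁ i, ∑ i, γ₁ i • W₁ i⟫)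
        = ⟪X, γ₂ • W₂⟫ / ⟪γ₂ • W₂, γ₂ • W₂⟫) :
    (⟪βlong • X + (∑ i, γ₁ i • W₁ i) + γ₂ • W₂,
        βlong • X + (∑ i, γ₁ i • W₁ i) + γ₂ • W₂⟫ / ⟪Y, Y⟫
      - ⟪βmed • X + ∑ i, γmed i • W₁ i, βmed • X + ∑ i, γmed i • W₁ i⟫ / ⟪Y, Y⟫)
        * ⟪Y, Y⟫ * δ * ⟪X, ∑ i, γ₁ i • W₁ i⟫
      = (βmed - βlong) * ⟪perpW1 W₁ X, perpW1 W₁ X⟫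
          * (⟪∑ i, γ₁ i • W₁ i, ∑ i, γ₁ i • W₁ i⟫
            - (βmed - βlong) * δ * ⟪X, ∑ i, γ₁ i • W₁ i⟫) := by
  have hgW1 : (gram W₁).PosDef := gram_posdef_of_sub hpdXW
  set B : ℝ := βmed - βlong with hB
  set Xp : V := perpW1 W₁ X with hXpdef
  -- orthogonality of Xp to W₁
  have hperp : ∀ i, ⟪Xp, W₁ i⟫ = 0 := fun i => perp_inner_W1 hgW1 i
  -- commuted hypotheses
  have hXU : ⟪X, U⟫ = 0 := by rw [real_inner_comm]; exact hUX
  have hW1U : ∀ i, ⟪W₁ i, U⟫ = 0 := fun i => by rw [real_inner_comm]; exact hUW1 i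
  have hW2U : ⟪W₂, U⟫ = 0 := by rw [real_inner_comm]; exact hUW2
  have hXV : ⟪X, Vres⟫ = 0 := by rw [real_inner_comm]; exact hVX
  have hW1V : ∀ i, ⟪W₁ i, Vres⟫ = 0 := fun i => by rw [real_inner_comm]; exact hVW1 i
  have hW2W1 : ∀ i, ⟪W₂, W₁ i⟫ = 0 := fun i => by rw [real_inner_comm]; exact hexog i
  -- ⟪Xp, X⟫ = ⟪Xp, Xp⟫
  have hpX : ⟪Xp, X⟫ = ⟪Xp, Xp⟫ := by
    rw [hXpdef, inner_perp]
    simp [perp_inner_W1 hgW1]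
  -- ⟪Xp, W₂⟫ = ⟪X, W₂⟫
  have hXpW2 : ⟪Xp, W₂⟫ = ⟪X, W₂⟫ := by
    rw [hXpdef, perpW1, inner_sub_left, sum_smul_inner]
    simp [hexog]
  -- the vector identity:  Vres - U = γ₂ • W₂ - B • Xp
  have hVU : Vres - U = (βlong - βmed) • X + ((∑ i, γ₁ i • W₁ i) - ∑ i, γmed i • W₁ i)
      + γ₂ • W₂ := by
    have h : βmed • X + (∑ i, γmed i • W₁ i) + Vres
        = βlong • X + (∑ i, γ₁ i • W₁ i) + γ₂ • W₂ + U := by rw [← hlong, ← hmed]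
    have h2 : Vres = (βlong • X + (∑ i, γ₁ i • W₁ i) + γ₂ • W₂ + U)
        - (βmed • X + ∑ i, γmed i • W₁ i) := eq_sub_of_add_eq' h
    rw [h2, sub_smul]
    abel
  set c : Fin d → ℝ := fun i => γ₁ i - γmed i - B * pi1 W₁ X i with hc
  have hsum : ∑ i, c i • W₁ i
      = ((∑ i, γ₁ i • W₁ i) - ∑ i, γmed i • W₁ i) - B • ∑ i, pi1 W₁ X i • W₁ i := by
    rw [Finset.smul_sum, ← Finset.sum_sub_distrib, ← Finset.sum_sub_distrib]
    refine Finset.sum_congr rfl fun i _ => ?_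
    rw [hc]
    module
  have hZ : (Vres - U) - (γ₂ • W₂ - B • Xp) = ∑ i, c i • W₁ i := by
    rw [hVU, hsum, hXpdef, perpW1, hB]
    module
  have hZW : ∀ i, ⟪W₁ i, ∑ j, c j • W₁ j⟫ = 0 := by
    intro i
    rw [real_inner_comm, ← hZ, inner_sub_left, inner_sub_left, inner_sub_left,
      real_inner_smul_left, real_inner_smul_left, hVW1 i, hUW1 i, hW2W1 i, hperp i]
    ring
  have hZ0 : ∑ i, c i • W₁ i = 0 := by
    rw [← inner_self_eq_zero (𝕜 := ℝ), sum_smul_inner]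
    exact Finset.sum_eq_zero fun i _ => by
      rw [hZW i, mul_zero]
  have hR : Vres - U = γ₂ • W₂ - B • Xp := by
    have := hZ.trans hZ0
    exact sub_eq_zero.mp this
  -- positivity facts
  have hY : 0 < ⟪Y, Y⟫ := by
    have hone : (Sum.elim (fun _ : Unit => (1:ℝ)) (0 : Unit ⊕ Fin d → ℝ)) ≠ 0 := by
      intro h
      have := congrFun h (Sum.inl ())
      simp at this
    have h := hpdYX.dotProduct_mulVec_pos hone
    rw [star_trivial, quad_gram] at h
    have hsum1 : ∑ i, (Sum.elim (fun _ : Unit => (1:ℝ)) (0 : Unit ⊕ Fin d → ℝ)) i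
        • (Sum.elim (fun _ : Unit => Y) (Sum.elim (fun _ : Unit => X) W₁)) i = Y := by
      rw [Fintype.sum_sum_type]
      simp
    rw [hsum1] at h
    exact h
  have hg : 0 < ⟪∑ i, γ₁ i • W₁ i, ∑ i, γ₁ i • W₁ i⟫ := by
    have h := hgW1.dotProduct_mulVec_pos hγ₁
    rw [star_trivial, quad_gram] at h
    exact h
  -- fact A :  γ₂ * s = B * p
  have hA : γ₂ * ⟪X, W₂⟫ = B * ⟪Xp, Xp⟫ := by
    have h0 : ⟪Vres - U, X⟫ = 0 := by rw [inner_sub_left, hVX, hUX, sub_zero]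
    rw [hR, inner_sub_left, real_inner_smul_left, real_inner_smul_left, hpX] at h0
    linear_combination h0 + γ₂ * real_inner_comm W₂ X
  -- fact C :  γ₂ * (δ * c) = g * s
  have hC : γ₂ * (δ * ⟪X, ∑ i, γ₁ i • W₁ i⟫)
      = ⟪∑ i, γ₁ i • W₁ i, ∑ i, γ₁ i • W₁ i⟫ * ⟪X, W₂⟫ := by
    have hXg : ⟪X, γ₂ • W₂⟫ = γ₂ * ⟪X, W₂⟫ := real_inner_smul_right _ _ _
    have hgg : ⟪γ₂ • W₂, γ₂ • W₂⟫ = γ₂ * γ₂ := by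
      rw [real_inner_smul_left, real_inner_smul_right, hnorm]
      ring
    rw [hXg, hgg] at hδ
    field_simp at hδ
    apply mul_left_cancel₀ hγ₂
    linear_combination γ₂ * hδ
  -- inner products with Y
  have hG1W2 : ⟪∑ i, γ₁ i • W₁ i, W₂⟫ = 0 := by
    rw [sum_smul_inner]
    simp [hexog]
  have hYW2 : ⟪Y, W₂⟫ = βlong * ⟪X, W₂⟫ + γ₂ := by
    conv_lhs => rw [hlong]
    rw [inner_add_left, inner_add_left, inner_add_left, real_inner_smul_left,
      real_inner_smul_left, hG1W2, hnorm, hUW2]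
    ring
  have hXXp : ⟪X, Xp⟫ = ⟪Xp, Xp⟫ := by rw [real_inner_comm]; exact hpX
  have hG1Xp : ⟪∑ i, γ₁ i • W₁ i, Xp⟫ = 0 := by
    rw [sum_smul_inner]
    refine Finset.sum_eq_zero fun i _ => ?_
    rw [real_inner_comm, hperp i, mul_zero]
  have hW2Xp : ⟪W₂, Xp⟫ = ⟪X, W₂⟫ := by rw [real_inner_comm]; exact hXpW2
  have hUXp : ⟪U, Xp⟫ = 0 := by
    rw [hXpdef, inner_perp, hUX]
    simp [hUW1]
  have hYXp : ⟪Y, Xp⟫ = βlong * ⟪Xp, Xp⟫ + γ₂ * ⟪X, W₂⟫ := by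
    conv_lhs => rw [hlong]
    rw [inner_add_left, inner_add_left, inner_add_left, real_inner_smul_left,
      real_inner_smul_left, hXXp, hG1Xp, hW2Xp, hUXp]
    ring
  have hG1U : ⟪∑ i, γ₁ i • W₁ i, U⟫ = 0 := by
    rw [sum_smul_inner]
    simp [hW1U]
  have hYU : ⟪Y, U⟫ = ⟪U, U⟫ := by
    conv_lhs => rw [hlong]
    rw [inner_add_left, inner_add_left, inner_add_left, real_inner_smul_left,
      hXU, hG1U, real_inner_smul_left, hW2U]
    ring
  have hGmV : ⟪∑ i, γmed i • W₁ i, Vres⟫ = 0 := by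
    rw [sum_smul_inner]
    simp [hW1V]
  have hYV : ⟪Y, Vres⟫ = ⟪Vres, Vres⟫ := by
    conv_lhs => rw [hmed]
    rw [inner_add_left, inner_add_left, real_inner_smul_left, hXV, hGmV]
    ring
  -- fitted variances
  have hLY : βlong • X + (∑ i, γ₁ i • W₁ i) + γ₂ • W₂ = Y - U := by
    rw [hlong]; abel
  have hMY : βmed • X + (∑ i, γmed i • W₁ i) = Y - Vres := by
    rw [hmed]; abel
  have hLL : ⟪βlong • X + (∑ i, γ₁ i • W₁ i) + γ₂ • W₂,
      βlong • X + (∑ i, γ₁ i • W₁ i) + γ₂ • W₂⟫ = ⟪Y, Y⟫ - ⟪U, U⟫ := by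
    rw [hLY, real_inner_sub_sub_self, hYU]
    ring
  have hMM : ⟪βmed • X + (∑ i, γmed i • W₁ i),
      βmed • X + (∑ i, γmed i • W₁ i)⟫ = ⟪Y, Y⟫ - ⟪Vres, Vres⟫ := by
    rw [hMY, real_inner_sub_sub_self, hYV]
    ring
  have hdiff : ⟪Vres, Vres⟫ - ⟪U, U⟫
      = γ₂ * (βlong * ⟪X, W₂⟫ + γ₂) - B * (βlong * ⟪Xp, Xp⟫ + γ₂ * ⟪X, W₂⟫) := by
    calc ⟪Vres, Vres⟫ - ⟪U, U⟫ = ⟪Y, Vres⟫ - ⟪Y, U⟫ := by rw [hYV, hYU]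
      _ = ⟪Y, Vres - U⟫ := (inner_sub_right _ _ _).symm
      _ = γ₂ * ⟪Y, W₂⟫ - B * ⟪Y, Xp⟫ := by
          rw [hR, inner_sub_right, real_inner_smul_right, real_inner_smul_right]
      _ = _ := by rw [hYW2, hYXp]
  rw [div_sub_div_same, div_mul_cancel₀ _ hY.ne', hLL, hMM]
  apply mul_left_cancel₀ hγ₂
  linear_combination (γ₂ * δ * ⟪X, ∑ i, γ₁ i • W₁ i⟫) * hdiff
    + (βlong * γ₂ * (δ * ⟪X, ∑ i, γ₁ i • W₁ i⟫)
        - B * γ₂ * (δ * ⟪X, ∑ i, γ₁ i • W₁ i⟫)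
        + γ₂ * ⟪∑ i, γ₁ i • W₁ i, ∑ i, γ₁ i • W₁ i⟫) * hA
    + γ₂ ^ 2 * hC
end

section
/- Under the same setup (positive definiteness, Cov(W₁,W₂)=0, Var(W₂)=1, γ₁ ≠ 0, γ₂ ≠ 0, and δ satisfying the proportional-selection equation), let B = β_med − β_long. Define f₀(B) = −B·Var(X^{⊥W₁})·( Var(γ_med'W₁) + 2B·Cov(X, γ_med'W₁) + B²·Var(π₁'W₁) ) and f₁(B, R²_long) = (R²_long − R²_med)Var(Y)·Cov(X, γ_med'W₁) + B(R²_long − R²_med)Var(Y)·Var(π₁'W₁) + B²·Var(X^{⊥W₁})·Cov(X, γ_med'W₁) + B³·Var(X^{⊥W₁})·Var(π₁'W₁). Then f₀(B) + δ·f₁(B, R²_long) = 0. -/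
open scoped RealInnerProductSpace

/-- `f₀(B) = −B·Var(X^{⊥W₁})·(Var(γ_med'W₁) + 2B·Cov(X,γ_med'W₁) + B²·Var(π₁'W₁))`. -/
noncomputable def f0 (vXp vGam cXg vPi B : ℝ) : ℝ :=
  -B * vXp * (vGam + 2 * B * cXg + B ^ 2 * vPi)

/-- `f₁(B, R²_long)` as in Oster's cubic. -/
noncomputable def f1 (R2l R2m vY cXg vPi vXp B : ℝ) : ℝ :=
  (R2l - R2m) * vY * cXg + B * (R2l - R2m) * vY * vPi
    + B ^ 2 * vXp * cXg + B ^ 3 * vXp * vPi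

section helpers
variable {V : Type*} [NormedAddCommGroup V] [InnerProductSpace ℝ V]
    {ι : Type*} [Fintype ι]

lemma quad (f : ι → V) (x : ι → ℝ) :
    dotProduct x ((gram f).mulVec x) = ⟪∑ i, x i • f i, ∑ i, x i • f i⟫ := by
  simp only [gram, dotProduct, Matrix.mulVec, Matrix.of_apply, sum_inner, inner_sum,
    real_inner_smul_left, real_inner_smul_right]
  simp [Finset.mul_sum, dotProduct]
  congr 1; ext i; congr 1; ext j; rw [real_inner_comm]; ring

lemma li_of_gram_posDef {f : ι → V} (h : (gram f).PosDef) :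
    LinearIndependent ℝ f := by
  rw [Fintype.linearIndependent_iff]
  intro g hg i
  by_contra hne
  have hg0 : g ≠ 0 := fun h0 => hne (by simp [h0])
  have := h.dotProduct_mulVec_pos hg0
  rw [show star g = g from rfl] at this
  rw [quad, hg] at this
  simp at this

lemma inner_self_pos' {v : V} (h : v ≠ 0) : 0 < ⟪v, v⟫ :=
  lt_of_le_of_ne real_inner_self_nonneg (fun he => h (inner_self_eq_zero.1 he.symm))

lemma gram_posDef_of_li {f : ι → V} (h : LinearIndependent ℝ f) :
    (gram f).PosDef := by
  apply Matrix.PosDef.of_dotProduct_mulVec_pos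
  · ext i j
    simp [gram, Matrix.conjTranspose_apply, real_inner_comm]
  · intro x hx
    rw [show star x = x from rfl, quad]
    have : ∑ i, x i • f i ≠ 0 := by
      intro h0
      exact hx (funext (Fintype.linearIndependent_iff.mp h x h0))
    exact inner_self_pos' this

lemma gram_mulVec_pi1 {d : ℕ} {W₁ : Fin d → V} (X : V) (h : (gram W₁).PosDef) :
    (gram W₁).mulVec (pi1 W₁ X) = fun i => ⟪W₁ i, X⟫ := by
  unfold pi1
  rw [Matrix.mulVec_mulVec, Matrix.mul_nonsing_inv _ (isUnit_iff_ne_zero.2 h.det_pos.ne')]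
  simp

lemma final_alg (B vXp vGam cXg vPi δ γ₂ r m vy : ℝ) (hy : vy ≠ 0)
    (h1 : r - m = γ₂ ^ 2 - B ^ 2 * vXp)
    (h4 : δ * (cXg + B * vPi) * γ₂ ^ 2 = B * vXp * (vGam + 2 * B * cXg + B ^ 2 * vPi)) :
    f0 vXp vGam cXg vPi B + δ * f1 (r / vy) (m / vy) vy cXg vPi vXp B = 0 := by
  simp only [f0, f1]
  field_simp
  linear_combination δ * (cXg + B * vPi) * h1 + h4

end helpers

/-- The true bias `B = β_med − β_long` is a root of Oster's cubic:
`f₀(B) + δ·f₁(B, R²_long) = 0`. -/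
theorem bias_is_root_of_oster_cubic
    {V : Type*} [NormedAddCommGroup V] [InnerProductSpace ℝ V] {d : ℕ}
    (Y X W₂ : V) (W₁ : Fin d → V)
    (hpdXW : (gram (Sum.elim (fun _ : Unit => X) (Sum.elim W₁ fun _ : Unit => W₂))).PosDef)
    (hpdYX : (gram (Sum.elim (fun _ : Unit => Y) (Sum.elim (fun _ : Unit => X) W₁))).PosDef)
    (hexog : ∀ i, ⟪W₁ i, W₂⟫ = 0)
    (hnorm : ⟪W₂, W₂⟫ = 1)
    (βlong βmed γ₂ δ : ℝ) (γ₁ γmed : Fin d → ℝ) (U Vres : V)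
    (hγ₁ : γ₁ ≠ 0) (hγ₂ : γ₂ ≠ 0)
    (hlong : Y = βlong • X + (∑ i, γ₁ i • W₁ i) + γ₂ • W₂ + U)
    (hUX : ⟪U, X⟫ = 0) (hUW1 : ∀ i, ⟪U, W₁ i⟫ = 0) (hUW2 : ⟪U, W₂⟫ = 0)
    (hmed : Y = βmed • X + (∑ i, γmed i • W₁ i) + Vres)
    (hVX : ⟪Vres, X⟫ = 0) (hVW1 : ∀ i, ⟪Vres, W₁ i⟫ = 0)
    (hδ : δ * (⟪X, ∑ i, γ₁ i • W₁ i⟫ / ⟪∑ i, γ₁ i • W₁ i, ∑ i, γ₁ i • W₁ i⟫)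
        = ⟪X, γ₂ • W₂⟫ / ⟪γ₂ • W₂, γ₂ • W₂⟫) :
    f0 ⟪perpW1 W₁ X, perpW1 W₁ X⟫
        ⟪∑ i, γmed i • W₁ i, ∑ i, γmed i • W₁ i⟫
        ⟪X, ∑ i, γmed i • W₁ i⟫
        ⟪∑ i, pi1 W₁ X i • W₁ i, ∑ i, pi1 W₁ X i • W₁ i⟫
        (βmed - βlong)
      + δ * f1
        (⟪βlong • X + (∑ i, γ₁ i • W₁ i) + γ₂ • W₂,
            βlong • X + (∑ i, γ₁ i • W₁ i) + γ₂ • W₂⟫ / ⟪Y, Y⟫)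
        (⟪βmed • X + ∑ i, γmed i • W₁ i, βmed • X + ∑ i, γmed i • W₁ i⟫ / ⟪Y, Y⟫)
        ⟪Y, Y⟫
        ⟪X, ∑ i, γmed i • W₁ i⟫
        ⟪∑ i, pi1 W₁ X i • W₁ i, ∑ i, pi1 W₁ X i • W₁ i⟫
        ⟪perpW1 W₁ X, perpW1 W₁ X⟫
        (βmed - βlong)
      = 0 := by
  classical
  unfold perpW1
  set B : ℝ := βmed - βlong with hB
  set S₁ : V := ∑ i, γ₁ i • W₁ i with hS₁def
  set Sm : V := ∑ i, γmed i • W₁ i with hSmdef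
  set P : V := ∑ i, pi1 W₁ X i • W₁ i with hPdef
  set Xp : V := X - P with hXp
  -- linear independence facts
  have hli : LinearIndependent ℝ
      (Sum.elim (fun _ : Unit => Y) (Sum.elim (fun _ : Unit => X) W₁)) :=
    li_of_gram_posDef hpdYX
  have hYne : Y ≠ 0 := hli.ne_zero (Sum.inl ())
  have hliW1 : LinearIndependent ℝ W₁ := by
    have := hli.comp (Sum.inr ∘ Sum.inr : Fin d → Unit ⊕ (Unit ⊕ Fin d))
      (Sum.inr_injective.comp Sum.inr_injective)
    exact this
  have hgW1 : (gram W₁).PosDef := gram_posDef_of_li hliW1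
  have hmulv : (gram W₁).mulVec (pi1 W₁ X) = fun i => ⟪W₁ i, X⟫ :=
    gram_mulVec_pi1 X hgW1
  -- perp orthogonality to each W₁ j
  have hperpW : ∀ j, ⟪Xp, W₁ j⟫ = 0 := by
    intro j
    have hj : ∑ i, pi1 W₁ X i * ⟪W₁ j, W₁ i⟫ = ⟪W₁ j, X⟫ := by
      have := congrFun hmulv j
      simpa [Matrix.mulVec, dotProduct, gram, mul_comm] using this
    rw [hXp, hPdef, inner_sub_left, sum_inner]
    simp only [real_inner_smul_left]
    have h2 : ∑ i, pi1 W₁ X i * ⟪W₁ i, W₁ j⟫ = ∑ i, pi1 W₁ X i * ⟪W₁ j, W₁ i⟫ :=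
      Finset.sum_congr rfl (fun i _ => by rw [real_inner_comm])
    rw [h2, hj, real_inner_comm, sub_self]
  have hperpSum : ∀ c : Fin d → ℝ, ⟪Xp, ∑ i, c i • W₁ i⟫ = 0 := by
    intro c
    rw [inner_sum]
    simp [real_inner_smul_right, hperpW]
  have hXpP : ⟪Xp, P⟫ = 0 := by rw [hPdef]; exact hperpSum _
  have hPW : ∀ j, ⟪P, W₁ j⟫ = ⟪X, W₁ j⟫ := by
    intro j
    have := hperpW j
    rw [hXp, inner_sub_left] at this
    linarith
  -- vector identity E
  have hE : γ₂ • W₂ + U - Vres = B • X + (Sm - S₁) := by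
    rw [hB]
    linear_combination (norm := module) hmed - hlong
  -- inner products with W₁ j
  have hW2W1 : ∀ j, ⟪W₂, W₁ j⟫ = 0 := fun j => by
    rw [real_inner_comm]; exact hexog j
  have hb : ∀ j, ⟪S₁, W₁ j⟫ = ⟪Sm, W₁ j⟫ + B * ⟪X, W₁ j⟫ := by
    intro j
    have h := congrArg (fun v => ⟪v, W₁ j⟫) hE
    simp only [inner_add_left, inner_sub_left, real_inner_smul_left] at h
    rw [hW2W1 j, hUW1 j, hVW1 j] at h
    linarith
  -- S₁ = Sm + B • P
  have hS1 : S₁ = Sm + B • P := by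
    have hv0 : ∀ j, ⟪S₁ - Sm - B • P, W₁ j⟫ = 0 := by
      intro j
      rw [inner_sub_left, inner_sub_left, real_inner_smul_left, hb j, hPW j]
      ring
    have hvS : ∀ c : Fin d → ℝ, ⟪S₁ - Sm - B • P, ∑ i, c i • W₁ i⟫ = 0 := by
      intro c
      rw [inner_sum]
      simp [real_inner_smul_right, hv0]
    have hzero : ⟪S₁ - Sm - B • P, S₁ - Sm - B • P⟫ = 0 := by
      nth_rewrite 2 [show S₁ - Sm - B • P = S₁ - Sm - B • P from rfl]
      rw [inner_sub_right, inner_sub_right, inner_smul_right]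
      nth_rewrite 1 [hS₁def]
      nth_rewrite 2 [hSmdef]
      nth_rewrite 2 [hPdef]
      rw [hvS γ₁, hvS γmed, hvS (pi1 W₁ X)]
      ring
    have hv00 : S₁ - Sm - B • P = 0 := inner_self_eq_zero.1 hzero
    linear_combination (norm := module) hv00
  -- key vector identity: γ₂W₂ + U - Vres = B • Xp
  have hEk : γ₂ • W₂ + U - Vres = B • Xp := by
    rw [hE, hS1, hXp]
    module
  -- scalar consequences
  have hXpX : ⟪Xp, X⟫ = ⟪Xp, Xp⟫ := by
    have h2 := inner_sub_right (𝕜 := ℝ) Xp X P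
    rw [← hXp, hXpP] at h2
    linarith
  have hW2P : ⟪W₂, P⟫ = 0 := by
    rw [hPdef, inner_sum]
    simp [real_inner_smul_right, hW2W1]
  have hUP : ⟪U, P⟫ = 0 := by
    rw [hPdef, inner_sum]
    simp [real_inner_smul_right, hUW1]
  have hW2Xp : ⟪W₂, Xp⟫ = ⟪W₂, X⟫ := by
    rw [hXp, inner_sub_right, hW2P, sub_zero]
  have hUXp : ⟪U, Xp⟫ = 0 := by
    rw [hXp, inner_sub_right, hUX, hUP, sub_zero]
  have hXW2 : γ₂ * ⟪W₂, X⟫ = B * ⟪Xp, Xp⟫ := by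
    have h := congrArg (fun v => ⟪v, X⟫) hEk
    simp only [inner_add_left, inner_sub_left, real_inner_smul_left] at h
    rw [hUX, hVX, hXpX] at h
    linarith
  have hVres : Vres = γ₂ • W₂ + U - B • Xp := by
    linear_combination (norm := module) -hEk
  have hVV : ⟪Vres, Vres⟫ = γ₂ ^ 2 + ⟪U, U⟫ - B ^ 2 * ⟪Xp, Xp⟫ := by
    have hW2U : ⟪W₂, U⟫ = 0 := by rw [real_inner_comm]; exact hUW2
    have hXpU : ⟪Xp, U⟫ = 0 := by rw [real_inner_comm]; exact hUXp
    have hXpW2 : ⟪Xp, W₂⟫ = ⟪W₂, X⟫ := by rw [real_inner_comm]; exact hW2Xp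
    rw [hVres]
    simp only [inner_add_left, inner_add_right, inner_sub_left, inner_sub_right,
      real_inner_smul_left, real_inner_smul_right]
    rw [hnorm, hW2U, hUW2, hXpU, hUXp, hXpW2, hW2Xp]
    linear_combination (-2 * B) * hXW2
  -- variance decompositions
  have hLU : ⟪βlong • X + S₁ + γ₂ • W₂, U⟫ = 0 := by
    have hXU : ⟪X, U⟫ = 0 := by rw [real_inner_comm]; exact hUX
    have hS1U : ⟪S₁, U⟫ = 0 := by
      rw [hS₁def, sum_inner]
      simp only [real_inner_smul_left]
      have : ∀ i, ⟪W₁ i, U⟫ = 0 := fun i => by rw [real_inner_comm]; exact hUW1 i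
      simp [this]
    have hW2U : ⟪W₂, U⟫ = 0 := by rw [real_inner_comm]; exact hUW2
    rw [inner_add_left, inner_add_left, real_inner_smul_left, real_inner_smul_left,
      hXU, hS1U, hW2U]
    ring
  have hMV : ⟪βmed • X + Sm, Vres⟫ = 0 := by
    have hXV : ⟪X, Vres⟫ = 0 := by rw [real_inner_comm]; exact hVX
    have hSmV : ⟪Sm, Vres⟫ = 0 := by
      rw [hSmdef, sum_inner]
      simp only [real_inner_smul_left]
      have : ∀ i, ⟪W₁ i, Vres⟫ = 0 := fun i => by rw [real_inner_comm]; exact hVW1 i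
      simp [this]
    rw [inner_add_left, real_inner_smul_left, hXV, hSmV]
    ring
  have hdecomp : ∀ L u : V, ⟪L, u⟫ = 0 → ⟪L + u, L + u⟫ = ⟪L, L⟫ + ⟪u, u⟫ := by
    intro L u h
    have h2 : ⟪u, L⟫ = 0 := by rw [real_inner_comm]; exact h
    rw [inner_add_left, inner_add_right, inner_add_right, h, h2]
    ring
  have hYYlong : ⟪Y, Y⟫ = ⟪βlong • X + S₁ + γ₂ • W₂, βlong • X + S₁ + γ₂ • W₂⟫ + ⟪U, U⟫ := by
    rw [hlong]
    exact hdecomp _ _ hLU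
  have hYYmed : ⟪Y, Y⟫ = ⟪βmed • X + Sm, βmed • X + Sm⟫ + ⟪Vres, Vres⟫ := by
    rw [hmed]
    exact hdecomp _ _ hMV
  have hrm : ⟪βlong • X + S₁ + γ₂ • W₂, βlong • X + S₁ + γ₂ • W₂⟫
      - ⟪βmed • X + Sm, βmed • X + Sm⟫ = γ₂ ^ 2 - B ^ 2 * ⟪Xp, Xp⟫ := by
    have := hVV
    linarith
  -- nondegeneracy
  have hS1ne : S₁ ≠ 0 := by
    intro h0
    apply hγ₁
    funext i
    exact Fintype.linearIndependent_iff.mp hliW1 γ₁ (by rw [← hS₁def]; exact h0) i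
  have hS1S1 : 0 < ⟪S₁, S₁⟫ := inner_self_pos' hS1ne
  have hvY : 0 < ⟪Y, Y⟫ := inner_self_pos' hYne
  -- projection identities
  have hXP : ⟪X, P⟫ = ⟪P, P⟫ := by
    have h2 := inner_sub_left (𝕜 := ℝ) X P P
    rw [← hXp, hXpP] at h2
    linarith
  have hSmP : ⟪Sm, P⟫ = ⟪X, Sm⟫ := by
    have h2 := inner_sub_left (𝕜 := ℝ) X P Sm
    rw [← hXp] at h2
    have h3 : ⟪Xp, Sm⟫ = 0 := by rw [hSmdef]; exact hperpSum _
    rw [h3] at h2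
    have h4 : ⟪P, Sm⟫ = ⟪Sm, P⟫ := real_inner_comm _ _
    have h5 : ⟪X, Sm⟫ = ⟪Sm, X⟫ := real_inner_comm _ _
    linarith [real_inner_comm X Sm]
  have hXS1v : ⟪X, S₁⟫ = ⟪X, Sm⟫ + B * ⟪P, P⟫ := by
    rw [hS1, inner_add_right, real_inner_smul_right, hXP]
  have hS1S1v : ⟪S₁, S₁⟫ = ⟪Sm, Sm⟫ + 2 * B * ⟪X, Sm⟫ + B ^ 2 * ⟪P, P⟫ := by
    rw [hS1]
    rw [inner_add_left, inner_add_right, inner_add_right, real_inner_smul_left,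
      real_inner_smul_left, real_inner_smul_right, real_inner_smul_right]
    have hPSm : ⟪P, Sm⟫ = ⟪X, Sm⟫ := by rw [real_inner_comm]; exact hSmP
    rw [hSmP, hPSm]
    ring
  -- cross-multiplied δ equation
  have hδ2 : δ * ⟪X, S₁⟫ * γ₂ ^ 2 = γ₂ * ⟪X, W₂⟫ * ⟪S₁, S₁⟫ := by
    rw [real_inner_smul_right, real_inner_smul_left, real_inner_smul_right, hnorm] at hδ
    field_simp at hδ
    linear_combination γ₂ * hδ
  have h4 : δ * (⟪X, Sm⟫ + B * ⟪P, P⟫) * γ₂ ^ 2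
      = B * ⟪Xp, Xp⟫ * (⟪Sm, Sm⟫ + 2 * B * ⟪X, Sm⟫ + B ^ 2 * ⟪P, P⟫) := by
    have hc : ⟪X, W₂⟫ = ⟪W₂, X⟫ := real_inner_comm _ _
    calc δ * (⟪X, Sm⟫ + B * ⟪P, P⟫) * γ₂ ^ 2 = δ * ⟪X, S₁⟫ * γ₂ ^ 2 := by rw [hXS1v]
    _ = γ₂ * ⟪X, W₂⟫ * ⟪S₁, S₁⟫ := hδ2
    _ = (γ₂ * ⟪W₂, X⟫) * ⟪S₁, S₁⟫ := by rw [hc]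
    _ = (B * ⟪Xp, Xp⟫) * ⟪S₁, S₁⟫ := by rw [hXW2]
    _ = B * ⟪Xp, Xp⟫ * (⟪Sm, Sm⟫ + 2 * B * ⟪X, Sm⟫ + B ^ 2 * ⟪P, P⟫) := by rw [hS1S1v]
  exact final_alg B ⟪Xp, Xp⟫ ⟪Sm, Sm⟫ ⟪X, Sm⟫ ⟪P, P⟫ δ γ₂ _ _ _ hvY.ne' hrm h4
end

section
/- Let f₀ and f₁ be as above, with Var(X^{⊥W₁}) > 0 and Var(Y) > 0, R²_long ∈ (R²_med, 1], and suppose β_short ≠ β_med (equivalently Cov(X, γ_med'W₁) ≠ 0). If B ∈ ℝ satisfies f₀(B) + δ·f₁(B, R²_long) = 0 for some δ ∈ ℝ, and if f₁(B, R²_long) = 0 would force f₀(B) = 0, then in fact f₁(B, R²_long) ≠ 0 unless B = β_med − b with b in the degenerate set {b : γ_med + (β_med − b)π₁ = 0}. Consequently, for any B = β_med − β_hypo with γ_med + B·π₁ ≠ 0, the value δ = −f₀(B)/f₁(B, R²_long) is the unique δ consistent with the bias being B. -/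
open scoped RealInnerProductSpace

/-- Point identification of `δ` given the bias (Oster's Proposition 3):
for any non-degenerate bias `B`, `f₁(B, R²_long) ≠ 0` and the unique `δ`
solving `f₀(B) + δ·f₁(B, R²_long) = 0` is `−f₀(B)/f₁(B, R²_long)`. -/
theorem delta_point_identified
    {V : Type*} [NormedAddCommGroup V] [InnerProductSpace ℝ V] {d : ℕ}
    (Y X : V) (W₁ : Fin d → V)
    (hpdW1 : (gram W₁).PosDef)
    (hpdYX : (gram (Sum.elim (fun _ : Unit => Y) (Sum.elim (fun _ : Unit => X) W₁))).PosDef)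
    (hvXp : 0 < ⟪perpW1 W₁ X, perpW1 W₁ X⟫)
    (hvarX : 0 < ⟪X, X⟫) (hvarY : 0 < ⟪Y, Y⟫)
    (βmed : ℝ) (γmed : Fin d → ℝ) (Vres : V)
    (hmed : Y = βmed • X + (∑ i, γmed i • W₁ i) + Vres)
    (hVX : ⟪Vres, X⟫ = 0) (hVW1 : ∀ i, ⟪Vres, W₁ i⟫ = 0)
    (hshort : ⟪Y, X⟫ / ⟪X, X⟫ ≠ βmed)
    (R2l : ℝ)
    (hR2l : R2l ∈ Set.Ioc
      (⟪βmed • X + ∑ i, γmed i • W₁ i, βmed • X + ∑ i, γmed i • W₁ i⟫ / ⟪Y, Y⟫) 1) :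
    ∀ B δ : ℝ, γmed + B • pi1 W₁ X ≠ 0 →
      f0 ⟪perpW1 W₁ X, perpW1 W₁ X⟫
          ⟪∑ i, γmed i • W₁ i, ∑ i, γmed i • W₁ i⟫
          ⟪X, ∑ i, γmed i • W₁ i⟫
          ⟪∑ i, pi1 W₁ X i • W₁ i, ∑ i, pi1 W₁ X i • W₁ i⟫ B
        + δ * f1 R2l
          (⟪βmed • X + ∑ i, γmed i • W₁ i, βmed • X + ∑ i, γmed i • W₁ i⟫ / ⟪Y, Y⟫)
          ⟪Y, Y⟫
          ⟪X, ∑ i, γmed i • W₁ i⟫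
          ⟪∑ i, pi1 W₁ X i • W₁ i, ∑ i, pi1 W₁ X i • W₁ i⟫
          ⟪perpW1 W₁ X, perpW1 W₁ X⟫ B = 0 →
      (f1 R2l
          (⟪βmed • X + ∑ i, γmed i • W₁ i, βmed • X + ∑ i, γmed i • W₁ i⟫ / ⟪Y, Y⟫)
          ⟪Y, Y⟫
          ⟪X, ∑ i, γmed i • W₁ i⟫
          ⟪∑ i, pi1 W₁ X i • W₁ i, ∑ i, pi1 W₁ X i • W₁ i⟫
          ⟪perpW1 W₁ X, perpW1 W₁ X⟫ B ≠ 0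
        ∧ δ = -(f0 ⟪perpW1 W₁ X, perpW1 W₁ X⟫
            ⟪∑ i, γmed i • W₁ i, ∑ i, γmed i • W₁ i⟫
            ⟪X, ∑ i, γmed i • W₁ i⟫
            ⟪∑ i, pi1 W₁ X i • W₁ i, ∑ i, pi1 W₁ X i • W₁ i⟫ B)
          / f1 R2l
            (⟪βmed • X + ∑ i, γmed i • W₁ i, βmed • X + ∑ i, γmed i • W₁ i⟫ / ⟪Y, Y⟫)
            ⟪Y, Y⟫
            ⟪X, ∑ i, γmed i • W₁ i⟫
            ⟪∑ i, pi1 W₁ X i • W₁ i, ∑ i, pi1 W₁ X i • W₁ i⟫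
            ⟪perpW1 W₁ X, perpW1 W₁ X⟫ B) := by
  intro B δ hng heq
  set G := ∑ i, γmed i • W₁ i with hG
  set P := ∑ i, pi1 W₁ X i • W₁ i with hP
  -- gram * pi1 = cov with X
  have hdet : IsUnit (gram W₁).det := isUnit_iff_ne_zero.mpr hpdW1.det_pos.ne'
  have hmv : Matrix.mulVec (gram W₁) (pi1 W₁ X) = fun i => ⟪W₁ i, X⟫ := by
    unfold pi1
    rw [Matrix.mulVec_mulVec, Matrix.mul_nonsing_inv _ hdet, Matrix.one_mulVec]
  have hPW : ∀ i, ⟪W₁ i, P⟫ = ⟪W₁ i, X⟫ := by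
    intro i
    have h := congrFun hmv i
    simp only [Matrix.mulVec, dotProduct, gram, Matrix.of_apply] at h
    rw [hP, inner_sum]
    simp only [real_inner_smul_right]
    rw [← h]
    exact Finset.sum_congr rfl fun j _ => (mul_comm _ _)
  have hperp : ∀ c : Fin d → ℝ, ⟪X - P, ∑ i, c i • W₁ i⟫ = 0 := by
    intro c
    rw [inner_sum]
    refine Finset.sum_eq_zero fun i _ => ?_
    rw [real_inner_smul_right, inner_sub_left, real_inner_comm (W₁ i) P, hPW i,
      real_inner_comm X (W₁ i)]
    ring
  have hXG : ⟪X, G⟫ = ⟪P, G⟫ := by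
    have := hperp γmed
    rw [← hG, inner_sub_left] at this
    linarith
  have hXP : ⟪X, P⟫ = ⟪P, P⟫ := by
    have := hperp (pi1 W₁ X)
    rw [← hP, inner_sub_left] at this
    linarith
  -- Gram quadratic form
  have hGram : ∀ c : Fin d → ℝ,
      ⟪∑ i, c i • W₁ i, ∑ j, c j • W₁ j⟫ = dotProduct c (Matrix.mulVec (gram W₁) c) := by
    intro c
    rw [sum_inner]
    simp only [dotProduct, Matrix.mulVec, gram, Matrix.of_apply,
      real_inner_smul_left, inner_sum, real_inner_smul_right, Finset.mul_sum]
    exact Finset.sum_congr rfl fun i _ => Finset.sum_congr rfl fun j _ => by ring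
  -- positivity of the quadratic in f0
  have hu : G + B • P = ∑ i, (γmed + B • pi1 W₁ X) i • W₁ i := by
    rw [hG, hP, Finset.smul_sum, ← Finset.sum_add_distrib]
    exact Finset.sum_congr rfl fun i _ => by
      simp [Pi.add_apply, Pi.smul_apply, add_smul, smul_smul]
  have huu : 0 < ⟪G + B • P, G + B • P⟫ := by
    rw [hu, hGram]
    have := hpdW1.dotProduct_mulVec_pos hng
    simpa using this
  have hquad : ⟪G, G⟫ + 2 * B * ⟪X, G⟫ + B ^ 2 * ⟪P, P⟫
      = ⟪G + B • P, G + B • P⟫ := by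
    have h1 : ⟪G, B • P⟫ = B * ⟪X, G⟫ := by
      rw [real_inner_smul_right, real_inner_comm P G, ← hXG]
    have h2 : ⟪B • P, B • P⟫ = B ^ 2 * ⟪P, P⟫ := by
      rw [real_inner_smul_left, real_inner_smul_right]; ring
    rw [real_inner_add_add_self, h1, h2]
    ring
  -- cXg ≠ 0
  have hvX : ⟪X, X⟫ ≠ 0 := hvarX.ne'
  have hcXg : ⟪X, G⟫ ≠ 0 := by
    intro h0
    apply hshort
    rw [hmed, inner_add_left, inner_add_left, real_inner_smul_left,
      hVX, real_inner_comm X G, h0]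
    field_simp
    ring
  -- R² gap
  have hR2 : 0 < R2l - ⟪βmed • X + G, βmed • X + G⟫ / ⟪Y, Y⟫ := by
    have := hR2l.1
    linarith
  -- f₁ ≠ 0
  have hf1 : f1 R2l (⟪βmed • X + G, βmed • X + G⟫ / ⟪Y, Y⟫) ⟪Y, Y⟫ ⟪X, G⟫
      ⟪P, P⟫ ⟪perpW1 W₁ X, perpW1 W₁ X⟫ B ≠ 0 := by
    intro hf10
    have hf00 : f0 ⟪perpW1 W₁ X, perpW1 W₁ X⟫ ⟪G, G⟫ ⟪X, G⟫ ⟪P, P⟫ B = 0 := by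
      rw [hf10, mul_zero, add_zero] at heq
      exact heq
    have hB0 : B = 0 := by
      unfold f0 at hf00
      rw [hquad] at hf00
      rcases mul_eq_zero.mp hf00 with h | h
      · rcases mul_eq_zero.mp h with h' | h'
        · linarith [neg_eq_zero.mp h']
        · exact absurd h' hvXp.ne'
      · exact absurd h huu.ne'
    rw [hB0] at hf10
    unfold f1 at hf10
    have hvY : ⟪Y, Y⟫ ≠ 0 := hvarY.ne'
    have : (R2l - ⟪βmed • X + G, βmed • X + G⟫ / ⟪Y, Y⟫) * ⟪Y, Y⟫ * ⟪X, G⟫ = 0 := by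
      rw [← hf10]; ring
    rcases mul_eq_zero.mp this with h | h
    · rcases mul_eq_zero.mp h with h' | h'
      · exact hR2.ne' h'
      · exact hvY h'
    · exact hcXg h
  refine ⟨hf1, ?_⟩
  field_simp
  linarith
end

section
/- Assume Var(X^{⊥W₁}) > 0, Var(π₁'W₁) > 0, Cov(X, γ_med'W₁) ≠ 0, Var(Y) > 0 and R²_long > R²_med. Define δ(B) = −f₀(B)/f₁(B, R²_long) for all B where f₁(B, R²_long) ≠ 0, with f₀, f₁ as above. Then lim_{B → +∞} δ(B) = 1 and lim_{B → −∞} δ(B) = 1. Moreover for all sufficiently large B > 0, sign(δ(B) − 1) = sign(Cov(X, γ_med'W₁)), and for all sufficiently large B > 0, sign(δ(−B) − 1) = −sign(Cov(X, γ_med'W₁)). -/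
/-- Asymptotics of `δ(B) = −f₀(B)/f₁(B, R²_long)`: it tends to `1` as
`B → ±∞`, and for large `B > 0` the sign of `δ(B) − 1` equals
`sign(Cov(X, γ_med'W₁))` while the sign of `δ(−B) − 1` is its negative. -/
theorem delta_of_bias_asymptotics
    (vXp vPi cXg vGam vY R2l R2m : ℝ)
    (hvXp : 0 < vXp) (hvPi : 0 < vPi) (hcXg : cXg ≠ 0)
    (hvY : 0 < vY) (hR2 : R2m < R2l) :
    Filter.Tendsto (fun B : ℝ => -(f0 vXp vGam cXg vPi B) / f1 R2l R2m vY cXg vPi vXp B)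
      Filter.atTop (nhds 1)
    ∧ Filter.Tendsto (fun B : ℝ => -(f0 vXp vGam cXg vPi B) / f1 R2l R2m vY cXg vPi vXp B)
      Filter.atBot (nhds 1)
    ∧ (∀ᶠ B in Filter.atTop,
        Real.sign (-(f0 vXp vGam cXg vPi B) / f1 R2l R2m vY cXg vPi vXp B - 1)
          = Real.sign cXg)
    ∧ (∀ᶠ B in Filter.atTop,
        Real.sign (-(f0 vXp vGam cXg vPi (-B)) / f1 R2l R2m vY cXg vPi vXp (-B) - 1)
          = -Real.sign cXg) := by
  set c : ℝ := (R2l - R2m) * vY with hc_def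
  have hc : 0 < c := mul_pos (by linarith) hvY
  set N : ℝ → ℝ := fun t => vXp * (vGam * t ^ 2 + 2 * cXg * t + vPi) with hN_def
  set D : ℝ → ℝ := fun t => c * cXg * t ^ 3 + c * vPi * t ^ 2 + vXp * cXg * t + vXp * vPi
    with hD_def
  set M : ℝ → ℝ := fun t => vXp * cXg + (vXp * vGam - c * vPi) * t - c * cXg * t ^ 2
    with hM_def
  have hL : 0 < vXp * vPi := mul_pos hvXp hvPi
  have hcontN : Continuous N := by fun_prop
  have hcontD : Continuous D := by fun_prop
  have hcontM : Continuous M := by fun_prop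
  have hN0 : N 0 = vXp * vPi := by simp [hN_def]
  have hD0 : D 0 = vXp * vPi := by simp [hD_def]
  have hM0 : M 0 = vXp * cXg := by simp [hM_def]
  -- key algebraic identities for B ≠ 0
  have hnum : ∀ B : ℝ, B ≠ 0 → -(f0 vXp vGam cXg vPi B) = B ^ 3 * N B⁻¹ := by
    intro B hB
    simp only [f0, hN_def]
    field_simp
  have hden : ∀ B : ℝ, B ≠ 0 → f1 R2l R2m vY cXg vPi vXp B = B ^ 3 * D B⁻¹ := by
    intro B hB
    simp only [f1, hD_def, hc_def]
    field_simp
  have hdiff : ∀ B : ℝ, B ≠ 0 →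
      -(f0 vXp vGam cXg vPi B) - f1 R2l R2m vY cXg vPi vXp B = B ^ 2 * M B⁻¹ := by
    intro B hB
    simp only [f0, f1, hM_def, hc_def]
    field_simp
    ring
  have heq : ∀ B : ℝ, B ≠ 0 →
      -(f0 vXp vGam cXg vPi B) / f1 R2l R2m vY cXg vPi vXp B = N B⁻¹ / D B⁻¹ := by
    intro B hB
    rw [hnum B hB, hden B hB, mul_div_mul_left _ _ (pow_ne_zero 3 hB)]
  -- limit along atTop
  have hinvTop : Filter.Tendsto (fun B : ℝ => B⁻¹) Filter.atTop (nhds 0) :=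
    tendsto_inv_atTop_zero
  have hinvBot : Filter.Tendsto (fun B : ℝ => B⁻¹) Filter.atBot (nhds 0) := by
    have h1 : Filter.Tendsto (fun B : ℝ => (-B)⁻¹) Filter.atBot (nhds 0) :=
      tendsto_inv_atTop_zero.comp Filter.tendsto_neg_atBot_atTop
    have h2 := h1.neg
    simp only [neg_zero] at h2
    refine h2.congr fun B => by rw [inv_neg, neg_neg]
  have tend1 : ∀ (l : Filter ℝ), Filter.Tendsto (fun B : ℝ => B⁻¹) l (nhds 0) →
      Filter.Tendsto (fun B : ℝ => N B⁻¹ / D B⁻¹) l (nhds 1) := by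
    intro l hl
    have hN' : Filter.Tendsto (fun B : ℝ => N B⁻¹) l (nhds (vXp * vPi)) := by
      have := (hcontN.tendsto 0).comp hl
      rwa [hN0] at this
    have hD' : Filter.Tendsto (fun B : ℝ => D B⁻¹) l (nhds (vXp * vPi)) := by
      have := (hcontD.tendsto 0).comp hl
      rwa [hD0] at this
    have := hN'.div hD' hL.ne'
    rwa [div_self hL.ne'] at this
  have htop : Filter.Tendsto
      (fun B : ℝ => -(f0 vXp vGam cXg vPi B) / f1 R2l R2m vY cXg vPi vXp B)
      Filter.atTop (nhds 1) := by
    refine (tend1 _ hinvTop).congr' ?_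
    filter_upwards [Filter.eventually_gt_atTop (0:ℝ)] with B hB
    exact (heq B hB.ne').symm
  have hbot : Filter.Tendsto
      (fun B : ℝ => -(f0 vXp vGam cXg vPi B) / f1 R2l R2m vY cXg vPi vXp B)
      Filter.atBot (nhds 1) := by
    refine (tend1 _ hinvBot).congr' ?_
    filter_upwards [Filter.eventually_lt_atBot (0:ℝ)] with B hB
    exact (heq B hB.ne).symm
  -- eventual positivity of D ∘ inv, and sign of M ∘ inv
  have hDpos : ∀ᶠ B : ℝ in Filter.atTop, 0 < D B⁻¹ := by
    have hD' : Filter.Tendsto (fun B : ℝ => D B⁻¹) Filter.atTop (nhds (vXp * vPi)) := by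
      have := (hcontD.tendsto 0).comp hinvTop
      rwa [hD0] at this
    exact hD'.eventually (eventually_gt_nhds hL)
  have hDposneg : ∀ᶠ B : ℝ in Filter.atTop, 0 < D (-B)⁻¹ := by
    have hinv : Filter.Tendsto (fun B : ℝ => (-B)⁻¹) Filter.atTop (nhds 0) :=
      hinvBot.comp Filter.tendsto_neg_atTop_atBot
    have hD' : Filter.Tendsto (fun B : ℝ => D (-B)⁻¹) Filter.atTop (nhds (vXp * vPi)) := by
      have := (hcontD.tendsto 0).comp hinv
      rwa [hD0] at this
    exact hD'.eventually (eventually_gt_nhds hL)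
  have hMs : ∀ᶠ B : ℝ in Filter.atTop, Real.sign (M B⁻¹) = Real.sign cXg := by
    have hM' : Filter.Tendsto (fun B : ℝ => M B⁻¹) Filter.atTop (nhds (vXp * cXg)) := by
      have := (hcontM.tendsto 0).comp hinvTop
      rwa [hM0] at this
    rcases hcXg.lt_or_gt with h | h
    · have : ∀ᶠ B : ℝ in Filter.atTop, M B⁻¹ < 0 :=
        hM'.eventually (eventually_lt_nhds (by nlinarith))
      filter_upwards [this] with B hB
      rw [Real.sign_of_neg hB, Real.sign_of_neg h]
    · have : ∀ᶠ B : ℝ in Filter.atTop, 0 < M B⁻¹ :=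
        hM'.eventually (eventually_gt_nhds (by nlinarith))
      filter_upwards [this] with B hB
      rw [Real.sign_of_pos hB, Real.sign_of_pos h]
  have hMsneg : ∀ᶠ B : ℝ in Filter.atTop, Real.sign (M (-B)⁻¹) = Real.sign cXg := by
    have hinv : Filter.Tendsto (fun B : ℝ => (-B)⁻¹) Filter.atTop (nhds 0) :=
      hinvBot.comp Filter.tendsto_neg_atTop_atBot
    have hM' : Filter.Tendsto (fun B : ℝ => M (-B)⁻¹) Filter.atTop (nhds (vXp * cXg)) := by
      have := (hcontM.tendsto 0).comp hinv
      rwa [hM0] at this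
    rcases hcXg.lt_or_gt with h | h
    · have : ∀ᶠ B : ℝ in Filter.atTop, M (-B)⁻¹ < 0 :=
        hM'.eventually (eventually_lt_nhds (by nlinarith))
      filter_upwards [this] with B hB
      rw [Real.sign_of_neg hB, Real.sign_of_neg h]
    · have : ∀ᶠ B : ℝ in Filter.atTop, 0 < M (-B)⁻¹ :=
        hM'.eventually (eventually_gt_nhds (by nlinarith))
      filter_upwards [this] with B hB
      rw [Real.sign_of_pos hB, Real.sign_of_pos h]
  refine ⟨htop, hbot, ?_, ?_⟩
  · filter_upwards [hDpos, hMs, Filter.eventually_gt_atTop (0:ℝ)] with B hD hM hB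
    have hBne : B ≠ 0 := hB.ne'
    have hf1 : 0 < f1 R2l R2m vY cXg vPi vXp B := by
      rw [hden B hBne]; positivity
    have key : -(f0 vXp vGam cXg vPi B) / f1 R2l R2m vY cXg vPi vXp B - 1
        = (B ^ 2 * M B⁻¹) / f1 R2l R2m vY cXg vPi vXp B := by
      rw [← hdiff B hBne]
      field_simp
    rw [key, ← hM]
    rcases lt_trichotomy (M B⁻¹) 0 with h | h | h
    · have hnum' : B ^ 2 * M B⁻¹ < 0 := mul_neg_of_pos_of_neg (by positivity) h
      rw [Real.sign_of_neg (div_neg_of_neg_of_pos hnum' hf1), Real.sign_of_neg h]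
    · simp [h]
    · have hnum' : 0 < B ^ 2 * M B⁻¹ := mul_pos (by positivity) h
      rw [Real.sign_of_pos (div_pos hnum' hf1), Real.sign_of_pos h]
  · filter_upwards [hDposneg, hMsneg, Filter.eventually_gt_atTop (0:ℝ)] with B hD hM hB
    have hBne : (-B : ℝ) ≠ 0 := by simpa using hB.ne'
    have hf1 : f1 R2l R2m vY cXg vPi vXp (-B) < 0 := by
      rw [hden (-B) hBne]
      have hB3 : 0 < B ^ 3 := by positivity
      have : (-B : ℝ) ^ 3 < 0 := by nlinarith [hB3]
      exact mul_neg_of_neg_of_pos this hD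
    have key : -(f0 vXp vGam cXg vPi (-B)) / f1 R2l R2m vY cXg vPi vXp (-B) - 1
        = ((-B) ^ 2 * M (-B)⁻¹) / f1 R2l R2m vY cXg vPi vXp (-B) := by
      rw [← hdiff (-B) hBne, sub_div, div_self hf1.ne]
    rw [key, ← hM]
    rcases lt_trichotomy (M (-B)⁻¹) 0 with h | h | h
    · have hnum' : (-B) ^ 2 * M (-B)⁻¹ < 0 := by
        apply mul_neg_of_pos_of_neg _ h
        positivity
      rw [Real.sign_of_pos (div_pos_of_neg_of_neg hnum' hf1), Real.sign_of_neg h]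
      norm_num
    · rw [h, mul_zero, zero_div, Real.sign_zero, neg_zero]
    · have hnum' : 0 < (-B) ^ 2 * M (-B)⁻¹ := by
        apply mul_pos _ h
        positivity
      rw [Real.sign_of_neg (div_neg_of_pos_of_neg hnum' hf1), Real.sign_of_pos h]
end

section
/- Under the assumptions of the previous statement (and with β_med ≠ 0), define the sign-change breakdown point δ_sign(R²_long) = inf { |δ| : δ ∈ ℝ and the cubic equation f₀(β_med − b) + δ·f₁(β_med − b, R²_long) = 0 has a solution b with sign(b) ≠ sign(β_med) or b·β_med ≤ 0 }. Then δ_sign(R²_long) ≤ 1. -/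
/-- The sign-change breakdown point is at most `1`: the infimum of `|δ|` over
all `δ` for which Oster's cubic (at `R²_long`) has a solution `b` with sign
different from `β_med` (or `b·β_med ≤ 0`) is bounded above by `1`. -/
theorem sign_change_breakdown_le_one
    (vXp vPi cXg vGam vY R2l R2m βmed : ℝ)
    (hvXp : 0 < vXp) (hvPi : 0 < vPi) (hcXg : cXg ≠ 0)
    (hvY : 0 < vY) (hR2 : R2m < R2l) (hR2l : R2l ≤ 1) (hβ : βmed ≠ 0) :
    sInf {x : ℝ | ∃ δ b : ℝ, x = |δ|
      ∧ f0 vXp vGam cXg vPi (βmed - b) + δ * f1 R2l R2m vY cXg vPi vXp (βmed - b) = 0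
      ∧ (Real.sign b ≠ Real.sign βmed ∨ b * βmed ≤ 0)} ≤ 1 := by
  set S : Set ℝ := {x : ℝ | ∃ δ b : ℝ, x = |δ|
      ∧ f0 vXp vGam cXg vPi (βmed - b) + δ * f1 R2l R2m vY cXg vPi vXp (βmed - b) = 0
      ∧ (Real.sign b ≠ Real.sign βmed ∨ b * βmed ≤ 0)} with hSdef
  set L : ℝ := vXp * vPi * βmed ^ 3 with hLdef
  have hL : L ≠ 0 :=
    mul_ne_zero (mul_ne_zero hvXp.ne' hvPi.ne') (pow_ne_zero _ hβ)
  set P : ℝ → ℝ := fun u =>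
    -vXp * (vGam * βmed * u ^ 2 + 2 * cXg * βmed ^ 2 * u + vPi * βmed ^ 3) with hP
  set Q : ℝ → ℝ := fun u =>
    vXp * vPi * βmed ^ 3 + vXp * cXg * βmed ^ 2 * u
      + (R2l - R2m) * vY * vPi * βmed * u ^ 2 + (R2l - R2m) * vY * cXg * u ^ 3 with hQ
  have hPc : Continuous P := by fun_prop
  have hQc : Continuous Q := by fun_prop
  have hP0 : P 0 = -L := by simp [hP, hLdef]; ring
  have hQ0 : Q 0 = L := by simp [hQ, hLdef]
  have hn : Filter.Tendsto (fun t : ℝ => P t⁻¹) Filter.atTop (nhds (-L)) := by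
    have h := (hPc.tendsto 0).comp tendsto_inv_atTop_zero
    rwa [hP0] at h
  have hq : Filter.Tendsto (fun t : ℝ => Q t⁻¹) Filter.atTop (nhds L) := by
    have h := (hQc.tendsto 0).comp tendsto_inv_atTop_zero
    rwa [hQ0] at h
  have hδ : Filter.Tendsto (fun t : ℝ => -(P t⁻¹) / (Q t⁻¹)) Filter.atTop (nhds 1) := by
    have h := (hn.neg).div hq hL
    rwa [neg_neg, div_self hL] at h
  -- factorization identities
  have hf0 : ∀ t : ℝ, t ≠ 0 → f0 vXp vGam cXg vPi (t * βmed) = t ^ 3 * P t⁻¹ := by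
    intro t ht
    simp only [f0, hP]
    field_simp
  have hf1 : ∀ t : ℝ, t ≠ 0 →
      f1 R2l R2m vY cXg vPi vXp (t * βmed) = t ^ 3 * Q t⁻¹ := by
    intro t ht
    simp only [f1, hQ]
    field_simp
    ring
  have key : ∀ ε : ℝ, 0 < ε → ∃ x ∈ S, x ≤ 1 + ε := by
    intro ε hε
    have habs : Filter.Tendsto (fun t : ℝ => |(-(P t⁻¹) / (Q t⁻¹))|) Filter.atTop (nhds 1) := by
      have h := hδ.abs
      rwa [abs_one] at h
    have h1 : ∀ᶠ t : ℝ in Filter.atTop, |(-(P t⁻¹) / (Q t⁻¹))| < 1 + ε :=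
      habs.eventually_lt_const (by linarith)
    have h2 : ∀ᶠ t : ℝ in Filter.atTop, Q t⁻¹ ≠ 0 := hq.eventually_ne hL
    have h3 : ∀ᶠ t : ℝ in Filter.atTop, (1 : ℝ) ≤ t := Filter.eventually_ge_atTop 1
    obtain ⟨t, ht1, ht2, ht3⟩ := (h1.and (h2.and h3)).exists
    have htpos : (0 : ℝ) < t := lt_of_lt_of_le one_pos ht3
    have htne : t ≠ 0 := htpos.ne'
    refine ⟨|(-(P t⁻¹) / (Q t⁻¹))|, ?_, le_of_lt ht1⟩
    refine ⟨-(P t⁻¹) / (Q t⁻¹), βmed - t * βmed, rfl, ?_, ?_⟩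
    · have hB : βmed - (βmed - t * βmed) = t * βmed := by ring
      rw [hB, hf0 t htne, hf1 t htne]
      have hc := div_mul_cancel₀ (-(P t⁻¹)) ht2
      linear_combination t ^ 3 * hc
    · right
      nlinarith [sq_nonneg βmed, sq_nonneg (βmed - t * βmed)]
  have hbdd : BddBelow S := by
    refine ⟨0, ?_⟩
    rintro x ⟨δ, b, rfl, -, -⟩
    exact abs_nonneg δ
  refine le_of_forall_pos_le_add ?_
  intro ε hε
  obtain ⟨x, hx, hxle⟩ := key ε hε
  exact le_trans (csInf_le hbdd hx) hxle
end

section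
/- Let W₁ be a random vector with Var(W₁) positive definite, and let X, Y, W₂ satisfy Cov(W₁, W₂) = 0 with the long projection Y = β_long X + γ₁'W₁ + γ₂W₂ + U and medium projection Y = β_med X + γ_med'W₁ + V, and π₁ = Var(W₁)⁻¹Cov(W₁, X). Then: there exists C ∈ ℝ with γ₁ = C·π₁ if and only if there exists C_med ∈ ℝ with γ_med = C_med·π₁. -/
open scoped RealInnerProductSpace

/-- Testability of the proportional-coefficients assumption: under exogenous
controls, `γ₁` is proportional to `π₁` if and only if `γ_med` is proportional
to `π₁`. -/
theorem proportional_iff_proportional_med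
    {V : Type*} [NormedAddCommGroup V] [InnerProductSpace ℝ V] {d : ℕ}
    (Y X W₂ : V) (W₁ : Fin d → V)
    (hpdW1 : (gram W₁).PosDef)
    (hexog : ∀ i, ⟪W₁ i, W₂⟫ = 0)
    (βlong βmed γ₂ : ℝ) (γ₁ γmed : Fin d → ℝ) (U Vres : V)
    (hlong : Y = βlong • X + (∑ i, γ₁ i • W₁ i) + γ₂ • W₂ + U)
    (hUX : ⟪U, X⟫ = 0) (hUW1 : ∀ i, ⟪U, W₁ i⟫ = 0) (hUW2 : ⟪U, W₂⟫ = 0)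
    (hmed : Y = βmed • X + (∑ i, γmed i • W₁ i) + Vres)
    (hVX : ⟪Vres, X⟫ = 0) (hVW1 : ∀ i, ⟪Vres, W₁ i⟫ = 0) :
    (∃ C : ℝ, γ₁ = C • pi1 W₁ X) ↔ (∃ C : ℝ, γmed = C • pi1 W₁ X) := by
  have hdet : IsUnit (gram W₁).det := isUnit_iff_ne_zero.mpr hpdW1.det_pos.ne'
  have heq : βlong • X + (∑ i, γ₁ i • W₁ i) + γ₂ • W₂ + U
      = βmed • X + (∑ i, γmed i • W₁ i) + Vres := by rw [← hlong, ← hmed]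
  have key : ∀ j, (gram W₁).mulVec γmed j
      = (gram W₁).mulVec γ₁ j + (βlong - βmed) * ⟪W₁ j, X⟫ := by
    intro j
    have hU : ⟪W₁ j, U⟫ = 0 := by rw [real_inner_comm]; exact hUW1 j
    have hVr : ⟪W₁ j, Vres⟫ = 0 := by rw [real_inner_comm]; exact hVW1 j
    have h := congrArg (fun z => ⟪W₁ j, z⟫) heq
    simp only [inner_add_right, inner_smul_right, inner_sum, hU, hVr, hexog j,
      mul_zero, add_zero] at h
    simp only [Matrix.mulVec, dotProduct, gram, Matrix.of_apply]
    have hs : ∀ g : Fin d → ℝ, ∑ i, ⟪W₁ j, W₁ i⟫ * g i = ∑ i, g i * ⟪W₁ j, W₁ i⟫ := by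
      intro g; exact Finset.sum_congr rfl fun i _ => mul_comm _ _
    rw [hs, hs]
    linarith
  have hvec : (gram W₁).mulVec γmed
      = (gram W₁).mulVec γ₁ + (βlong - βmed) • fun j => ⟪W₁ j, X⟫ := by
    funext j
    simpa using key j
  have hrel : γmed = γ₁ + (βlong - βmed) • pi1 W₁ X := by
    have h1 : (gram W₁)⁻¹.mulVec ((gram W₁).mulVec γmed)
        = (gram W₁)⁻¹.mulVec ((gram W₁).mulVec γ₁ + (βlong - βmed) • fun j => ⟪W₁ j, X⟫) := by
      rw [hvec]
    simp only [Matrix.mulVec_add, Matrix.mulVec_smul, Matrix.mulVec_mulVec,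
      Matrix.nonsing_inv_mul _ hdet, Matrix.one_mulVec] at h1
    simpa [pi1] using h1
  constructor
  · rintro ⟨C, hC⟩
    refine ⟨C + (βlong - βmed), ?_⟩
    rw [hrel, hC, add_smul]
  · rintro ⟨C, hC⟩
    refine ⟨C - (βlong - βmed), ?_⟩
    have : γ₁ = γmed - (βlong - βmed) • pi1 W₁ X := by rw [hrel]; abel
    rw [this, hC]; module
end

section
/- Suppose Var(X^{⊥W₁}) > 0, Var(Y) > 0, Cov(X, γ_med'W₁) ≠ 0, R²_long ∈ (R²_med, 1], and γ_med = C_med·π₁ for some C_med ∈ ℝ (proportional coefficients). Then Cov(X, γ_med'W₁)² = Var(π₁'W₁)·Var(γ_med'W₁), and the quadratic equation f₀(B) + f₁(B, R²_long) = 0 (i.e., δ = 1) in B has exactly two real roots: B₁ = (R²_long − R²_med)Var(Y)·Var(π₁'W₁) / ( Var(X^{⊥W₁})·Cov(X, γ_med'W₁) ) and B₂ = −Var(γ_med'W₁)/Cov(X, γ_med'W₁), and these roots are distinct. -/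
open scoped RealInnerProductSpace

lemma quad_aux (vXp vY vPi C r R2l : ℝ) (hXp : 0 < vXp) (hY : 0 < vY)
    (hPi : 0 < vPi) (hC : C ≠ 0) (hr : r < R2l) :
    (C * vPi) ^ 2 = vPi * (C ^ 2 * vPi)
    ∧ (∀ B : ℝ, f0 vXp (C ^ 2 * vPi) (C * vPi) vPi B
          + f1 R2l r vY (C * vPi) vPi vXp B = 0
        ↔ B = (R2l - r) * vY * vPi / (vXp * (C * vPi))
          ∨ B = -(C ^ 2 * vPi) / (C * vPi))
    ∧ (R2l - r) * vY * vPi / (vXp * (C * vPi))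
        ≠ -(C ^ 2 * vPi) / (C * vPi) := by
  have hK : 0 < (R2l - r) * vY := mul_pos (by linarith) hY
  have hPi' := hPi.ne'
  have hB1 : (R2l - r) * vY * vPi / (vXp * (C * vPi)) = (R2l - r) * vY / (vXp * C) := by
    field_simp
  have hB2 : -(C ^ 2 * vPi) / (C * vPi) = -C := by
    field_simp
  refine ⟨by ring, fun B => ?_, ?_⟩
  · have hfact : f0 vXp (C ^ 2 * vPi) (C * vPi) vPi B
        + f1 R2l r vY (C * vPi) vPi vXp B
        = -(vXp * C * vPi) * (B - (R2l - r) * vY / (vXp * C)) * (B - (-C)) := by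
      simp only [f0, f1]
      field_simp
      ring
    rw [hfact, hB1, hB2]
    constructor
    · intro h
      rcases mul_eq_zero.mp h with h | h
      · rcases mul_eq_zero.mp h with h | h
        · exfalso; simp at h
          rcases h with (h | h) | h
          exacts [hXp.ne' h, hC h, hPi' h]
        · exact Or.inl (by linarith [sub_eq_zero.mp h])
      · exact Or.inr (by linarith [sub_eq_zero.mp h])
    · rintro (h | h) <;> rw [h] <;> ring
  · rw [hB1, hB2]
    intro h
    have hvC : vXp * C ≠ 0 := mul_ne_zero hXp.ne' hC
    field_simp at h
    nlinarith [mul_pos hK (mul_pos hXp hPi), sq_nonneg C, mul_pos hXp hPi]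

/-- Under proportional coefficients (`γ_med = C_med·π₁`),
`Cov(X,γ_med'W₁)² = Var(π₁'W₁)·Var(γ_med'W₁)`, and the `δ = 1` equation
`f₀(B) + f₁(B, R²_long) = 0` has exactly the two distinct roots `B₁` and `B₂`. -/
theorem delta_one_quadratic_roots
    {V : Type*} [NormedAddCommGroup V] [InnerProductSpace ℝ V] {d : ℕ}
    (Y X : V) (W₁ : Fin d → V)
    (hpdW1 : (gram W₁).PosDef)
    (hvXp : 0 < ⟪perpW1 W₁ X, perpW1 W₁ X⟫)
    (hvarY : 0 < ⟪Y, Y⟫)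
    (βmed : ℝ) (γmed : Fin d → ℝ) (Vres : V)
    (hmed : Y = βmed • X + (∑ i, γmed i • W₁ i) + Vres)
    (hVX : ⟪Vres, X⟫ = 0) (hVW1 : ∀ i, ⟪Vres, W₁ i⟫ = 0)
    (hcXg : ⟪X, ∑ i, γmed i • W₁ i⟫ ≠ 0)
    (Cmed : ℝ) (hprop : γmed = Cmed • pi1 W₁ X)
    (R2l : ℝ)
    (hR2l : R2l ∈ Set.Ioc
      (⟪βmed • X + ∑ i, γmed i • W₁ i, βmed • X + ∑ i, γmed i • W₁ i⟫ / ⟪Y, Y⟫) 1) :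
    ⟪X, ∑ i, γmed i • W₁ i⟫ ^ 2
      = ⟪∑ i, pi1 W₁ X i • W₁ i, ∑ i, pi1 W₁ X i • W₁ i⟫
        * ⟪∑ i, γmed i • W₁ i, ∑ i, γmed i • W₁ i⟫
    ∧ (∀ B : ℝ,
        f0 ⟪perpW1 W₁ X, perpW1 W₁ X⟫
          ⟪∑ i, γmed i • W₁ i, ∑ i, γmed i • W₁ i⟫
          ⟪X, ∑ i, γmed i • W₁ i⟫
          ⟪∑ i, pi1 W₁ X i • W₁ i, ∑ i, pi1 W₁ X i • W₁ i⟫ B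
        + f1 R2l
          (⟪βmed • X + ∑ i, γmed i • W₁ i, βmed • X + ∑ i, γmed i • W₁ i⟫ / ⟪Y, Y⟫)
          ⟪Y, Y⟫
          ⟪X, ∑ i, γmed i • W₁ i⟫
          ⟪∑ i, pi1 W₁ X i • W₁ i, ∑ i, pi1 W₁ X i • W₁ i⟫
          ⟪perpW1 W₁ X, perpW1 W₁ X⟫ B = 0
      ↔ B = (R2l
            - ⟪βmed • X + ∑ i, γmed i • W₁ i, βmed • X + ∑ i, γmed i • W₁ i⟫ / ⟪Y, Y⟫)
            * ⟪Y, Y⟫ * ⟪∑ i, pi1 W₁ X i • W₁ i, ∑ i, pi1 W₁ X i • W₁ i⟫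
            / (⟪perpW1 W₁ X, perpW1 W₁ X⟫ * ⟪X, ∑ i, γmed i • W₁ i⟫)
        ∨ B = -⟪∑ i, γmed i • W₁ i, ∑ i, γmed i • W₁ i⟫ / ⟪X, ∑ i, γmed i • W₁ i⟫)
    ∧ (R2l - ⟪βmed • X + ∑ i, γmed i • W₁ i, βmed • X + ∑ i, γmed i • W₁ i⟫ / ⟪Y, Y⟫)
          * ⟪Y, Y⟫ * ⟪∑ i, pi1 W₁ X i • W₁ i, ∑ i, pi1 W₁ X i • W₁ i⟫
          / (⟪perpW1 W₁ X, perpW1 W₁ X⟫ * ⟪X, ∑ i, γmed i • W₁ i⟫)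
        ≠ -⟪∑ i, γmed i • W₁ i, ∑ i, γmed i • W₁ i⟫ / ⟪X, ∑ i, γmed i • W₁ i⟫ := by
  classical
  set P : V := ∑ i, pi1 W₁ X i • W₁ i with hP
  have hdet : IsUnit (gram W₁).det := isUnit_iff_ne_zero.mpr hpdW1.det_pos.ne'
  have hmul : (gram W₁).mulVec (pi1 W₁ X) = fun i => ⟪W₁ i, X⟫ := by
    unfold pi1
    rw [Matrix.mulVec_mulVec, Matrix.mul_nonsing_inv _ hdet, Matrix.one_mulVec]
  have hortho : ∀ i, ⟪perpW1 W₁ X, W₁ i⟫ = 0 := by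
    intro i
    have h1 : ∑ j, ⟪W₁ i, W₁ j⟫ * pi1 W₁ X j = ⟪W₁ i, X⟫ :=
      congrFun hmul i
    have h2 : ⟪X, W₁ i⟫ - ∑ j, pi1 W₁ X j * ⟪W₁ j, W₁ i⟫ = 0 := by
      rw [sub_eq_zero, real_inner_comm, ← h1]
      exact Finset.sum_congr rfl fun j _ => by rw [real_inner_comm (W₁ i), mul_comm]
    simpa [perpW1, inner_sub_left, sum_inner, real_inner_smul_left] using h2
  have hperpP : ⟪perpW1 W₁ X, P⟫ = 0 := by
    rw [hP, inner_sum]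
    exact Finset.sum_eq_zero fun i _ => by
      rw [real_inner_smul_right, hortho i, mul_zero]
  have hXP : ⟪X, P⟫ = ⟪P, P⟫ := by
    have hX : X = perpW1 W₁ X + P := by rw [perpW1, hP]; abel
    calc ⟪X, P⟫ = ⟪perpW1 W₁ X + P, P⟫ := by rw [← hX]
      _ = ⟪P, P⟫ := by rw [inner_add_left, hperpP, zero_add]
  have hG : (∑ i, γmed i • W₁ i) = Cmed • P := by
    rw [hP, Finset.smul_sum]
    exact Finset.sum_congr rfl fun i _ => by rw [hprop]; simp [smul_smul]
  have hcXgeq : ⟪X, ∑ i, γmed i • W₁ i⟫ = Cmed * ⟪P, P⟫ := by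
    rw [hG, real_inner_smul_right, hXP]
  have hvGameq : ⟪∑ i, γmed i • W₁ i, ∑ i, γmed i • W₁ i⟫ = Cmed ^ 2 * ⟪P, P⟫ := by
    rw [hG, real_inner_smul_left, real_inner_smul_right]; ring
  have hC : Cmed ≠ 0 := by
    intro h; apply hcXg; rw [hcXgeq, h, zero_mul]
  have hPi : 0 < ⟪P, P⟫ := by
    rcases lt_or_eq_of_le (real_inner_self_nonneg (x := P)) with h | h
    · exact h
    · exfalso; apply hcXg; rw [hcXgeq, ← h, mul_zero]
  rw [hcXgeq, hvGameq]
  exact quad_aux _ _ _ _ _ _ hvXp hvarY hPi hC hR2l.1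
end

section
/- In the setting of the previous statement, the root B₂ = −Var(γ_med'W₁)/Cov(X, γ_med'W₁) satisfies Var( (γ_med + B₂·π₁)'W₁ ) = 0, i.e., γ_med + B₂·π₁ = 0 when Var(W₁) is positive definite. Hence β_med − B₂ lies in the degenerate set {b : γ_med + (β_med − b)π₁ = 0}, and the unique non-degenerate solution of the δ = 1 equation is β_long = β_med − B₁ = β_med + (β_med − β_short)·(R²_long − R²_med)/(R²_med − R²_short). -/
open scoped RealInnerProductSpace

section OsterHelpers

variable {V : Type*} [NormedAddCommGroup V] [InnerProductSpace ℝ V] {d : ℕ}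

private lemma oster_inner_sum_smul (x : V) (c : Fin d → ℝ) (W : Fin d → V) :
    ⟪x, ∑ i, c i • W i⟫ = ∑ i, c i * ⟪x, W i⟫ := by
  rw [inner_sum]
  exact Finset.sum_congr rfl fun i _ => real_inner_smul_right _ _ _

private lemma oster_gram_mulVec_pi1 (W₁ : Fin d → V) (X : V) (hpd : (gram W₁).PosDef) :
    (gram W₁).mulVec (pi1 W₁ X) = fun i => ⟪W₁ i, X⟫ := by
  unfold pi1
  rw [Matrix.mulVec_mulVec, Matrix.mul_nonsing_inv _ (isUnit_iff_ne_zero.mpr hpd.det_pos.ne'),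
    Matrix.one_mulVec]

private lemma oster_inner_X_P (W₁ : Fin d → V) (X : V) (hpd : (gram W₁).PosDef) :
    ⟪X, ∑ i, pi1 W₁ X i • W₁ i⟫ = ⟪∑ i, pi1 W₁ X i • W₁ i, ∑ i, pi1 W₁ X i • W₁ i⟫ := by
  rw [oster_inner_sum_smul, sum_inner]
  refine Finset.sum_congr rfl fun i _ => ?_
  rw [real_inner_smul_left, oster_inner_sum_smul]
  have := congrFun (oster_gram_mulVec_pi1 W₁ X hpd) i
  simp only [Matrix.mulVec, dotProduct, gram, Matrix.of_apply] at this
  rw [real_inner_comm]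
  rw [← this]
  congr 1
  exact Finset.sum_congr rfl fun j _ => by ring

private lemma oster_algebra (vX vY vP vXp Cmed βmed R2l B M : ℝ)
    (hvX : vX ≠ 0) (hvY : vY ≠ 0) (hvXp : vXp ≠ 0) (hvP : vP ≠ 0) (hC : Cmed ≠ 0)
    (hXp : vXp = vX - vP)
    (hM : M = βmed ^ 2 * vX + 2 * (βmed * (Cmed * vP)) + Cmed ^ 2 * vP)
    (hCB : Cmed + B ≠ 0)
    (heq : f0 vXp (Cmed ^ 2 * vP) (Cmed * vP) vP B
      + f1 R2l (M / vY) vY (Cmed * vP) vP vXp B = 0) :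
    βmed - B = βmed + (βmed - (βmed * vX + Cmed * vP) / vX)
      * (R2l - M / vY)
      / (M / vY - ((βmed * vX + Cmed * vP) / vX) ^ 2 * vX / vY) := by
  subst hXp
  have hR2m : M / vY * vY = M := by field_simp
  have hfac : vP * (Cmed + B) * ((R2l * vY - M / vY * vY) - B * Cmed * (vX - vP)) = 0 := by
    unfold f0 f1 at heq
    linear_combination heq
  rw [hR2m] at hfac
  have hD : R2l * vY - M - B * Cmed * (vX - vP) = 0 := by
    rcases mul_eq_zero.mp hfac with h | h
    · rcases mul_eq_zero.mp h with h' | h'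
      · exact absurd h' hvP
      · exact absurd h' hCB
    · exact h
  subst hM
  have hden : (βmed ^ 2 * vX + 2 * (βmed * (Cmed * vP)) + Cmed ^ 2 * vP) / vY
      - ((βmed * vX + Cmed * vP) / vX) ^ 2 * vX / vY
      = Cmed ^ 2 * vP * (vX - vP) / (vX * vY) := by
    field_simp
    ring
  rw [hden]
  field_simp
  linear_combination (Cmed * vP) * hD

end OsterHelpers

/-- Oster's Proposition 1 with sharpness: under proportional coefficients,
the root `B₂ = −Var(γ_med'W₁)/Cov(X,γ_med'W₁)` of the `δ = 1` equation is
degenerate (`γ_med + B₂·π₁ = 0`), and the unique non-degenerate solution is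
`β_long = β_med + (β_med − β_short)·(R²_long − R²_med)/(R²_med − R²_short)`. -/


theorem oster_prop1_sharp
    {V : Type*} [NormedAddCommGroup V] [InnerProductSpace ℝ V] {d : ℕ}
    (Y X : V) (W₁ : Fin d → V)
    (hpdW1 : (gram W₁).PosDef)
    (hvXp : 0 < ⟪perpW1 W₁ X, perpW1 W₁ X⟫)
    (hvarX : 0 < ⟪X, X⟫) (hvarY : 0 < ⟪Y, Y⟫)
    (βmed : ℝ) (γmed : Fin d → ℝ) (Vres : V)
    (hmed : Y = βmed • X + (∑ i, γmed i • W₁ i) + Vres)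
    (hVX : ⟪Vres, X⟫ = 0) (hVW1 : ∀ i, ⟪Vres, W₁ i⟫ = 0)
    (hshort : ⟪Y, X⟫ / ⟪X, X⟫ ≠ βmed)
    (Cmed : ℝ) (hprop : γmed = Cmed • pi1 W₁ X)
    (R2l : ℝ)
    (hR2l : R2l ∈ Set.Ioc
      (⟪βmed • X + ∑ i, γmed i • W₁ i, βmed • X + ∑ i, γmed i • W₁ i⟫ / ⟪Y, Y⟫) 1) :
    (γmed + (-⟪∑ i, γmed i • W₁ i, ∑ i, γmed i • W₁ i⟫ / ⟪X, ∑ i, γmed i • W₁ i⟫)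
        • pi1 W₁ X = 0)
    ∧ ⟪∑ i, (γmed i + (-⟪∑ i, γmed i • W₁ i, ∑ i, γmed i • W₁ i⟫
          / ⟪X, ∑ i, γmed i • W₁ i⟫) * pi1 W₁ X i) • W₁ i,
        ∑ i, (γmed i + (-⟪∑ i, γmed i • W₁ i, ∑ i, γmed i • W₁ i⟫
          / ⟪X, ∑ i, γmed i • W₁ i⟫) * pi1 W₁ X i) • W₁ i⟫ = 0
    ∧ ∀ b : ℝ,
        (f0 ⟪perpW1 W₁ X, perpW1 W₁ X⟫
            ⟪∑ i, γmed i • W₁ i, ∑ i, γmed i • W₁ i⟫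
            ⟪X, ∑ i, γmed i • W₁ i⟫
            ⟪∑ i, pi1 W₁ X i • W₁ i, ∑ i, pi1 W₁ X i • W₁ i⟫ (βmed - b)
          + f1 R2l
            (⟪βmed • X + ∑ i, γmed i • W₁ i, βmed • X + ∑ i, γmed i • W₁ i⟫ / ⟪Y, Y⟫)
            ⟪Y, Y⟫
            ⟪X, ∑ i, γmed i • W₁ i⟫
            ⟪∑ i, pi1 W₁ X i • W₁ i, ∑ i, pi1 W₁ X i • W₁ i⟫
            ⟪perpW1 W₁ X, perpW1 W₁ X⟫ (βmed - b) = 0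
          ∧ γmed + (βmed - b) • pi1 W₁ X ≠ 0) →
        b = βmed + (βmed - ⟪Y, X⟫ / ⟪X, X⟫)
          * (R2l - ⟪βmed • X + ∑ i, γmed i • W₁ i,
              βmed • X + ∑ i, γmed i • W₁ i⟫ / ⟪Y, Y⟫)
          / (⟪βmed • X + ∑ i, γmed i • W₁ i, βmed • X + ∑ i, γmed i • W₁ i⟫ / ⟪Y, Y⟫
            - ⟪(⟪Y, X⟫ / ⟪X, X⟫) • X, (⟪Y, X⟫ / ⟪X, X⟫) • X⟫ / ⟪Y, Y⟫) := by
  have hXP := oster_inner_X_P W₁ X hpdW1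
  have hγW : (∑ i, γmed i • W₁ i) = Cmed • ∑ i, pi1 W₁ X i • W₁ i := by
    rw [hprop, Finset.smul_sum]
    exact Finset.sum_congr rfl fun i _ => by simp [smul_smul]
  have vGamEq : ⟪∑ i, γmed i • W₁ i, ∑ i, γmed i • W₁ i⟫
      = Cmed ^ 2 * ⟪∑ i, pi1 W₁ X i • W₁ i, ∑ i, pi1 W₁ X i • W₁ i⟫ := by
    rw [hγW, real_inner_smul_left, real_inner_smul_right]; ring
  have cXgEq : ⟪X, ∑ i, γmed i • W₁ i⟫
      = Cmed * ⟪∑ i, pi1 W₁ X i • W₁ i, ∑ i, pi1 W₁ X i • W₁ i⟫ := by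
    rw [hγW, real_inner_smul_right, hXP]
  have hYX : ⟪Y, X⟫ = βmed * ⟪X, X⟫
      + Cmed * ⟪∑ i, pi1 W₁ X i • W₁ i, ∑ i, pi1 W₁ X i • W₁ i⟫ := by
    rw [hmed]
    have hgX : ⟪∑ i, γmed i • W₁ i, X⟫
        = Cmed * ⟪∑ i, pi1 W₁ X i • W₁ i, ∑ i, pi1 W₁ X i • W₁ i⟫ := by
      rw [real_inner_comm]; exact cXgEq
    rw [inner_add_left, inner_add_left, real_inner_smul_left, hVX, hgX]
    ring
  have hMed : ⟪βmed • X + ∑ i, γmed i • W₁ i, βmed • X + ∑ i, γmed i • W₁ i⟫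
      = βmed ^ 2 * ⟪X, X⟫
        + 2 * (βmed * (Cmed * ⟪∑ i, pi1 W₁ X i • W₁ i, ∑ i, pi1 W₁ X i • W₁ i⟫))
        + Cmed ^ 2 * ⟪∑ i, pi1 W₁ X i • W₁ i, ∑ i, pi1 W₁ X i • W₁ i⟫ := by
    rw [real_inner_add_add_self, real_inner_smul_left, real_inner_smul_left,
      real_inner_smul_right, cXgEq, vGamEq]
    ring
  have hcXg : Cmed * ⟪∑ i, pi1 W₁ X i • W₁ i, ∑ i, pi1 W₁ X i • W₁ i⟫ ≠ 0 := by
    intro h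
    apply hshort
    rw [hYX, h, add_zero]
    exact mul_div_cancel_right₀ _ hvarX.ne'
  have hC : Cmed ≠ 0 := left_ne_zero_of_mul hcXg
  have hvP : ⟪∑ i, pi1 W₁ X i • W₁ i, ∑ i, pi1 W₁ X i • W₁ i⟫ ≠ 0 :=
    right_ne_zero_of_mul hcXg
  have hXpEq : ⟪perpW1 W₁ X, perpW1 W₁ X⟫
      = ⟪X, X⟫ - ⟪∑ i, pi1 W₁ X i • W₁ i, ∑ i, pi1 W₁ X i • W₁ i⟫ := by
    show ⟪X - ∑ i, pi1 W₁ X i • W₁ i, X - ∑ i, pi1 W₁ X i • W₁ i⟫ = _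
    rw [real_inner_sub_sub_self, hXP]
    ring
  have hβs : ⟪(⟪Y, X⟫ / ⟪X, X⟫) • X, (⟪Y, X⟫ / ⟪X, X⟫) • X⟫
      = ((βmed * ⟪X, X⟫
        + Cmed * ⟪∑ i, pi1 W₁ X i • W₁ i, ∑ i, pi1 W₁ X i • W₁ i⟫) / ⟪X, X⟫) ^ 2
        * ⟪X, X⟫ := by
    rw [real_inner_smul_left, real_inner_smul_right, hYX]
    ring
  have hB2 : -⟪∑ i, γmed i • W₁ i, ∑ i, γmed i • W₁ i⟫ / ⟪X, ∑ i, γmed i • W₁ i⟫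
      = -Cmed := by
    rw [vGamEq, cXgEq, div_eq_iff hcXg]
    ring
  have hfirst : γmed + (-⟪∑ i, γmed i • W₁ i, ∑ i, γmed i • W₁ i⟫
      / ⟪X, ∑ i, γmed i • W₁ i⟫) • pi1 W₁ X = 0 := by
    rw [hB2, hprop, ← add_smul]
    simp
  refine ⟨hfirst, ?_, ?_⟩
  · have h0 : (∑ i, (γmed i + (-⟪∑ i, γmed i • W₁ i, ∑ i, γmed i • W₁ i⟫
        / ⟪X, ∑ i, γmed i • W₁ i⟫) * pi1 W₁ X i) • W₁ i) = (0 : V) := by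
      refine Finset.sum_eq_zero fun i _ => ?_
      have := congrFun hfirst i
      simp only [Pi.add_apply, Pi.smul_apply, smul_eq_mul, Pi.zero_apply] at this
      rw [this, zero_smul]
    rw [h0, inner_zero_left]
  · rintro b ⟨heq, hnd⟩
    have hCB : Cmed + (βmed - b) ≠ 0 := by
      intro h
      exact hnd (by rw [hprop, ← add_smul, h, zero_smul])
    rw [vGamEq, cXgEq, hMed] at heq
    have := oster_algebra ⟪X, X⟫ ⟪Y, Y⟫
      ⟪∑ i, pi1 W₁ X i • W₁ i, ∑ i, pi1 W₁ X i • W₁ i⟫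
      ⟪perpW1 W₁ X, perpW1 W₁ X⟫ Cmed βmed R2l (βmed - b) _
      hvarX.ne' hvarY.ne' hvXp.ne' hvP hC hXpEq rfl hCB heq
    rw [hβs, hYX, hMed]
    linarith [this]
end
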